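/- Let P be a partially ordered set. If P is well-quasi-ordered and the set 𝒥^¬↓(P) of non-principal ideals of P is finite, then P is better-quasi-ordered. -/

import Mathlib

open Set

/-- `s` is an initial segment of the finite set `t` (w.r.t. increasing enumerations). -/
def InitSeg (s t : Finset ℕ) : Prop :=
  s ⊆ t ∧ ∀ x ∈ s, ∀ y ∈ t, y ∉ s → x < y

/-- `s` is an initial segment of the set `X ⊆ ℕ`. -/
def InitSegSet (s : Finset ℕ) (X : Set ℕ) : Prop :=
  ↑s ⊆ X ∧ ∀ x ∈ s, ∀ y ∈ X, y ∉ s → x < y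

/-- The union of a family of finite subsets of `ℕ`. -/
def unionOf (B : Set (Finset ℕ)) : Set ℕ := ⋃ s ∈ B, (s : Set ℕ)

/-- `B` is a block: `B` is infinite and every infinite subset of `⋃ B` has a nonempty
initial segment belonging to `B`. -/
def IsBlock (B : Set (Finset ℕ)) : Prop :=
  B.Infinite ∧ ∀ X : Set ℕ, X ⊆ unionOf B → X.Infinite →
    ∃ s ∈ B, s.Nonempty ∧ InitSegSet s X

/-- `B` is a barrier: a block no member of which is a proper subset of another member. -/
def IsBarrier (B : Set (Finset ℕ)) : Prop :=
  IsBlock B ∧ ∀ s ∈ B, ∀ t ∈ B, s ⊆ t → s = t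

/-- `B` is a thin block: a block which is an antichain under the initial-segment order. -/
def IsThinBlock (B : Set (Finset ℕ)) : Prop :=
  IsBlock B ∧ ∀ s ∈ B, ∀ t ∈ B, InitSeg s t → s = t

/-- `s ◁ t`: there is `r` such that `s` is a proper initial segment of `r` and `t` is
obtained from `r` by removing its least element. -/
def Tri (s t : Finset ℕ) : Prop :=
  ∃ r : Finset ℕ, InitSeg s r ∧ s ≠ r ∧ ∃ a ∈ r, (∀ b ∈ r, a ≤ b) ∧ t = r.erase a

/-- The map `f` is good on `B` w.r.t. the quasi-order `le`. -/
def GoodPair {Q : Type*} (le : Q → Q → Prop) (B : Set (Finset ℕ)) (f : Finset ℕ → Q) : Prop :=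
  ∃ s ∈ B, ∃ t ∈ B, Tri s t ∧ le (f s) (f t)

/-- A quasi-order is better-quasi-ordered if every map from every barrier into it is good. -/
def IsBqo {Q : Type*} (le : Q → Q → Prop) : Prop :=
  ∀ B : Set (Finset ℕ), IsBarrier B → ∀ f : Finset ℕ → Q, GoodPair le B f

/-- A quasi-order is well-quasi-ordered if it has no infinite strictly descending sequence
and no infinite antichain. -/
def IsWqo {Q : Type*} (le : Q → Q → Prop) : Prop :=
  (¬ ∃ f : ℕ → Q, ∀ n, le (f (n + 1)) (f n) ∧ ¬ le (f n) (f (n + 1))) ∧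
    ¬ ∃ f : ℕ → Q, ∀ m n : ℕ, m ≠ n → ¬ le (f m) (f n)

/-- The strict lexicographic order on finite subsets of `ℕ` (via increasing enumerations;
a proper initial segment is lexicographically smaller). -/
def lexLT (s t : Finset ℕ) : Prop :=
  List.Lex (· < ·) (s.sort (· ≤ ·)) (t.sort (· ≤ ·))

/-- The order type of `B` under the lexicographic order is at most `α`: there is a
map of `B` into the ordinals `< α` which is strictly increasing w.r.t. `lexLT`. -/
def TypeLE (B : Set (Finset ℕ)) (α : Ordinal) : Prop :=
  ∃ g : Finset ℕ → Ordinal, (∀ s ∈ B, g s < α) ∧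
    ∀ s ∈ B, ∀ t ∈ B, lexLT s t → g s < g t

/-- A quasi-order is `α`-better-quasi-ordered if every map from a barrier of order type
at most `α` into it is good. -/
def IsAlphaBqo (α : Ordinal) {Q : Type*} (le : Q → Q → Prop) : Prop :=
  ∀ B : Set (Finset ℕ), IsBarrier B → TypeLE B α →
    ∀ f : Finset ℕ → Q, GoodPair le B f

/-- Domination quasi-order on subsets of a quasi-ordered set. -/
def DomRel {Q : Type*} (le : Q → Q → Prop) (A B : Set Q) : Prop :=
  ∀ a ∈ A, ∃ b ∈ B, le a b

/-- `I` is an ideal: nonempty, downward closed and up-directed. -/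
def IsIdealRel {Q : Type*} (le : Q → Q → Prop) (I : Set Q) : Prop :=
  I.Nonempty ∧ (∀ x y, le x y → y ∈ I → x ∈ I) ∧
    ∀ x ∈ I, ∀ y ∈ I, ∃ z ∈ I, le x z ∧ le y z

/-- `I` is principal: it has a greatest element. -/
def IsPrincipalRel {Q : Type*} (le : Q → Q → Prop) (I : Set Q) : Prop :=
  ∃ a ∈ I, ∀ x ∈ I, le x a

/-- A maximal antichain: an antichain not properly contained in any other antichain. -/
def IsMaxAntichainRel {Q : Type*} (le : Q → Q → Prop) (A : Set Q) : Prop :=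
  IsAntichain le A ∧ ∀ B : Set Q, IsAntichain le B → A ⊆ B → A = B

/-- An interval order: no `a < b`, `c < d` with each of `a, b` incomparable to each
of `c, d`. -/
def IsIntervalOrder (P : Type*) [Preorder P] : Prop :=
  ¬ ∃ a b c d : P, a < b ∧ c < d ∧
    ¬ a ≤ c ∧ ¬ c ≤ a ∧ ¬ a ≤ d ∧ ¬ d ≤ a ∧
    ¬ b ≤ c ∧ ¬ c ≤ b ∧ ¬ b ≤ d ∧ ¬ d ≤ b

/-- `a ≤_pred b` iff every strict predecessor of `a` is a strict predecessor of `b`. -/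
def predLE {P : Type*} [PartialOrder P] (a b : P) : Prop := ∀ x, x < a → x < b

/-- `a ≤_succ b` iff every strict successor of `b` is a strict successor of `a`. -/
def succLE {P : Type*} [PartialOrder P] (a b : P) : Prop := ∀ y, b < y → a < y

/-- `a ≤_crit b` iff `a ≤_pred b` and `a ≤_succ b`. -/
def critLE {P : Type*} [PartialOrder P] (a b : P) : Prop := predLE a b ∧ succLE a b

namespace Stmt2Aux

open Classical

/-- generic dependent-choice chain -/
noncomputable def chainRec {α : Type*} {R : α → α → Prop} (h : ∀ a, ∃ b, R a b) (a0 : α) :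
    ℕ → α
  | 0 => a0
  | n+1 => Classical.choose (h (chainRec h a0 n))

theorem chainRec_spec {α : Type*} {R : α → α → Prop} (h : ∀ a, ∃ b, R a b) (a0 : α) (n : ℕ) :
    R (chainRec h a0 n) (chainRec h a0 (n+1)) := Classical.choose_spec _

/-- remove the minimum -/
def tl (X : Set ℕ) : Set ℕ := X \ {sInf X}

theorem tl_subset (X : Set ℕ) : tl X ⊆ X := Set.diff_subset

theorem tl_infinite {X : Set ℕ} (h : X.Infinite) : (tl X).Infinite :=
  h.diff (Set.finite_singleton _)

theorem sInf_lt_of_mem_tl {X : Set ℕ} {y : ℕ} (hy : y ∈ tl X) : sInf X < y := by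
  rcases hy with ⟨hyX, hne⟩
  simp only [Set.mem_singleton_iff] at hne
  exact lt_of_le_of_ne (Nat.sInf_le hyX) (Ne.symm hne)

theorem mem_tl {X : Set ℕ} {y : ℕ} (hyX : y ∈ X) (hy : sInf X < y) : y ∈ tl X :=
  ⟨hyX, by simp; omega⟩

theorem iseg_comp {s t : Finset ℕ} {X : Set ℕ} (hs : InitSegSet s X) (ht : InitSegSet t X) :
    s ⊆ t ∨ t ⊆ s := by
  by_contra h
  push_neg at h
  obtain ⟨⟨x, hx, hxt⟩, ⟨y, hy, hys⟩⟩ :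
      (∃ x ∈ s, x ∉ t) ∧ (∃ y ∈ t, y ∉ s) := by
    constructor
    · exact Finset.not_subset.1 h.1
    · exact Finset.not_subset.1 h.2
  have h1 : x < y := hs.2 x hx y (ht.1 hy) hys
  have h2 : y < x := ht.2 y hy x (hs.1 hx) hxt
  omega

theorem iseg_sInf_mem {s : Finset ℕ} {X : Set ℕ} (hs : InitSegSet s X) (hne : s.Nonempty) :
    sInf X ∈ s := by
  obtain ⟨x, hx⟩ := hne
  by_contra h
  have hX : X.Nonempty := ⟨x, hs.1 hx⟩
  have h1 : x < sInf X := hs.2 x hx (sInf X) (Nat.sInf_mem hX) h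
  have h2 : sInf X ≤ x := Nat.sInf_le (hs.1 hx)
  omega

/-- an infinite set of naturals has an infinite part above any bound -/
theorem infinite_above {X : Set ℕ} (h : X.Infinite) (N : ℕ) :
    {y ∈ X | N < y}.Infinite := by
  have : {y ∈ X | N < y} = X \ {y | y ≤ N} := by
    ext y
    simp only [Set.mem_setOf_eq, Set.mem_diff]
    exact ⟨fun ⟨h1, h2⟩ => ⟨h1, by omega⟩, fun ⟨h1, h2⟩ => ⟨h1, by omega⟩⟩
  rw [this]
  exact h.diff ((Set.finite_Iic N).subset (fun y hy => hy))

/-- increasing enumeration of (a subset of) an infinite set -/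
noncomputable def peel (X : Set ℕ) : ℕ → Set ℕ
  | 0 => X
  | n+1 => tl (peel X n)

theorem peel_infinite {X : Set ℕ} (h : X.Infinite) (n : ℕ) : (peel X n).Infinite := by
  induction n with
  | zero => exact h
  | succ n ih => exact tl_infinite ih

theorem peel_subset (X : Set ℕ) (n : ℕ) : peel X n ⊆ X := by
  induction n with
  | zero => exact le_refl _
  | succ n ih => exact (tl_subset _).trans ih

theorem peel_succ_subset (X : Set ℕ) (n : ℕ) : peel X (n+1) ⊆ peel X n := tl_subset _

theorem peel_mono (X : Set ℕ) {m n : ℕ} (h : m ≤ n) : peel X n ⊆ peel X m := by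
  induction n with
  | zero => simp_all
  | succ n ih =>
    rcases Nat.lt_or_ge m (n+1) with h' | h'
    · exact (peel_succ_subset X n).trans (ih (by omega))
    · have : m = n + 1 := by omega
      subst this; exact le_refl _

noncomputable def enum (X : Set ℕ) (n : ℕ) : ℕ := sInf (peel X n)

theorem enum_mem {X : Set ℕ} (h : X.Infinite) (n : ℕ) : enum X n ∈ peel X n :=
  Nat.sInf_mem (peel_infinite h n).nonempty

theorem enum_mem' {X : Set ℕ} (h : X.Infinite) (n : ℕ) : enum X n ∈ X :=
  peel_subset X n (enum_mem h n)

theorem enum_lt_succ {X : Set ℕ} (h : X.Infinite) (n : ℕ) : enum X n < enum X (n+1) :=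
  sInf_lt_of_mem_tl (enum_mem h (n+1))

theorem enum_strictMono {X : Set ℕ} (h : X.Infinite) : StrictMono (enum X) :=
  strictMono_nat_of_lt_succ (enum_lt_succ h)

theorem enum_lt_of_mem_peel {X : Set ℕ} (h : X.Infinite) {m n : ℕ} (hmn : m < n)
    {y : ℕ} (hy : y ∈ peel X n) : enum X m < y := by
  have h1 : y ∈ peel X (m+1) := peel_mono X hmn hy
  calc enum X m < enum X (m+1) := enum_lt_succ h m
    _ ≤ y := Nat.sInf_le h1

/-- if a monotone family of finsets has unbounded membership, the union is infinite -/
theorem infinite_iUnion_finsets {G : ℕ → Finset ℕ} (hcard : ∀ n, n ≤ (G n).card) :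
    (⋃ n, (G n : Set ℕ)).Infinite := by
  intro hfin
  obtain ⟨t, ht⟩ := hfin.exists_finset_coe
  have : ∀ n, G n ⊆ t := by
    intro n x hx
    have : (x : ℕ) ∈ (⋃ n, (G n : Set ℕ)) := Set.mem_iUnion.2 ⟨n, hx⟩
    rwa [← ht] at this
  have h1 := Finset.card_le_card (this (t.card + 1))
  have h2 := hcard (t.card + 1)
  omega

theorem finset_subset_of_subset_iUnion {G : ℕ → Finset ℕ}
    (mono : ∀ m n, m ≤ n → G m ⊆ G n) (s : Finset ℕ)
    (h : (s : Set ℕ) ⊆ ⋃ n, (G n : Set ℕ)) : ∃ n, s ⊆ G n := by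
  classical
  induction s using Finset.induction with
  | empty => exact ⟨0, by simp⟩
  | @insert a s ha ih =>
    have hs : (s : Set ℕ) ⊆ ⋃ n, (G n : Set ℕ) := by
      intro x hx; exact h (by simp [hx])
    obtain ⟨n, hn⟩ := ih hs
    have haU : (a : ℕ) ∈ ⋃ n, (G n : Set ℕ) := h (by simp)
    obtain ⟨m, hm⟩ := Set.mem_iUnion.1 haU
    refine ⟨max n m, ?_⟩
    intro x hx
    rcases Finset.mem_insert.1 hx with rfl | hx
    · exact mono m _ (le_max_right _ _) hm
    · exact mono n _ (le_max_left _ _) (hn hx)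

end Stmt2Aux
namespace Stmt2Aux

section Galvin

variable (S : Set (Finset ℕ))

/-- `M` accepts `s` (relative to the family `S`). -/
def acc (s : Finset ℕ) (M : Set ℕ) : Prop :=
  ∀ Y, Y ⊆ M → Y.Infinite → ∃ e : Finset ℕ, InitSegSet e Y ∧ s ∪ e ∈ S

/-- `M` rejects `s`. -/
def rej (s : Finset ℕ) (M : Set ℕ) : Prop :=
  ∀ N, N ⊆ M → N.Infinite → ¬ acc S s N

theorem acc_mono {s : Finset ℕ} {M N : Set ℕ} (h : N ⊆ M) (ha : acc S s M) : acc S s N :=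
  fun Y hY hinf => ha Y (hY.trans h) hinf

theorem rej_mono {s : Finset ℕ} {M N : Set ℕ} (h : N ⊆ M) (ha : rej S s M) : rej S s N :=
  fun Y hY hinf => ha Y (hY.trans h) hinf

theorem decide_one (s : Finset ℕ) (M : Set ℕ) (hM : M.Infinite) :
    ∃ N, N ⊆ M ∧ N.Infinite ∧ (acc S s N ∨ rej S s N) := by
  by_cases h : ∃ N, N ⊆ M ∧ N.Infinite ∧ acc S s N
  · obtain ⟨N, h1, h2, h3⟩ := h; exact ⟨N, h1, h2, Or.inl h3⟩
  · push_neg at h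
    exact ⟨M, le_refl _, hM, Or.inr (fun N h1 h2 => h N h1 h2)⟩

theorem decide_list (l : List (Finset ℕ)) (M : Set ℕ) (hM : M.Infinite) :
    ∃ N, N ⊆ M ∧ N.Infinite ∧ ∀ s ∈ l, acc S s N ∨ rej S s N := by
  induction l generalizing M with
  | nil => exact ⟨M, le_refl _, hM, by simp⟩
  | cons a l ih =>
    obtain ⟨N, h1, h2, h3⟩ := decide_one S a M hM
    obtain ⟨N', h1', h2', h3'⟩ := ih N h2
    refine ⟨N', h1'.trans h1, h2', ?_⟩
    intro s hs
    rcases List.mem_cons.1 hs with rfl | hs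
    · rcases h3 with h | h
      · exact Or.inl (acc_mono S h1' h)
      · exact Or.inr (rej_mono S h1' h)
    · exact h3' s hs

/-- state for the fusion construction -/
def FusSt : Type := {q : Set ℕ × Finset ℕ // q.1.Infinite ∧ ∀ x ∈ q.2, ∀ y ∈ q.1, x < y}

theorem fus_step : ∀ q : FusSt, ∃ q' : FusSt,
    q'.val.1 ⊆ q.val.1 ∧ (∀ y ∈ q'.val.1, sInf q.val.1 < y) ∧
    q'.val.2 = insert (sInf q.val.1) q.val.2 ∧
    (∀ s ∈ q'.val.2.powerset, acc S s q'.val.1 ∨ rej S s q'.val.1) := by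
  rintro ⟨⟨M, F⟩, hM, hF⟩
  set x := sInf M with hx
  have hM' : {y ∈ M | x < y}.Infinite := infinite_above hM x
  obtain ⟨N, h1, h2, h3⟩ := decide_list S ((insert x F).powerset.toList) _ hM'
  have hNM : N ⊆ M := h1.trans (fun y hy => hy.1)
  have hNx : ∀ y ∈ N, x < y := fun y hy => (h1 hy).2
  refine ⟨⟨(N, insert x F), h2, ?_⟩, hNM, hNx, rfl, ?_⟩
  · intro a ha y hy
    rcases Finset.mem_insert.1 ha with rfl | ha
    · exact hNx y hy
    · exact hF a ha y (hNM hy)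
  · intro s hs
    exact h3 s (Finset.mem_toList.2 hs)

variable {S}

theorem galvin_rej (M₀ : Set ℕ) (hM₀ : M₀.Infinite) (hrej : rej S ∅ M₀) :
    ∃ X, X ⊆ M₀ ∧ X.Infinite ∧ ∀ s : Finset ℕ, ↑s ⊆ X → s ∉ S := by
  classical
  -- stage 1 : fusion
  set st : ℕ → FusSt :=
    chainRec (fus_step S) ⟨(M₀, ∅), hM₀, by simp⟩ with hst
  have spec := chainRec_spec (fus_step S) (⟨(M₀, ∅), hM₀, by simp⟩ : FusSt)
  set xs : ℕ → ℕ := fun n => sInf (st n).val.1 with hxs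
  have hstinf : ∀ n, (st n).val.1.Infinite := fun n => (st n).2.1
  have hxsmem : ∀ n, xs n ∈ (st n).val.1 := fun n => Nat.sInf_mem (hstinf n).nonempty
  have hmono1 : ∀ n, (st (n+1)).val.1 ⊆ (st n).val.1 := fun n => (spec n).1
  have hmono : ∀ m n, m ≤ n → (st n).val.1 ⊆ (st m).val.1 := by
    intro m n h
    induction n with
    | zero =>
      have hm : m = 0 := by omega
      subst hm; exact le_refl _
    | succ n ih =>
      rcases Nat.lt_or_ge m (n+1) with h' | h'
      · exact (hmono1 n).trans (ih (by omega))
      · have hm : m = n + 1 := by omega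
        subst hm; exact le_refl _
  have hxslt : ∀ n, xs n < xs (n+1) := by
    intro n
    exact (spec n).2.1 _ (hxsmem (n+1))
  have hxsmono : StrictMono xs := strictMono_nat_of_lt_succ hxslt
  have hF : ∀ n, ((st n).val.2 : Set ℕ) = {y | ∃ i < n, xs i = y} := by
    intro n
    induction n with
    | zero =>
      have : (st 0).val.2 = ∅ := rfl
      rw [this]; ext y; simp
    | succ n ih =>
      rw [(spec n).2.2.1]
      ext y
      simp only [Finset.coe_insert, Set.mem_insert_iff, Set.mem_setOf_eq]
      rw [Set.ext_iff] at ih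
      constructor
      · rintro (rfl | hy)
        · exact ⟨n, by omega, rfl⟩
        · obtain ⟨i, hi, hiy⟩ := (ih y).1 hy
          exact ⟨i, by omega, hiy⟩
      · rintro ⟨i, hi, rfl⟩
        rcases Nat.lt_or_ge i n with h' | h'
        · exact Or.inr ((ih _).2 ⟨i, h', rfl⟩)
        · have : i = n := by omega
          subst this; exact Or.inl rfl
  set Xstar : Set ℕ := Set.range xs with hXstar
  have hXstarInf : Xstar.Infinite := Set.infinite_range_of_injective hxsmono.injective
  have hXstarM0 : Xstar ⊆ M₀ := by
    rintro y ⟨n, rfl⟩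
    exact hmono 0 n (by omega) (hxsmem n)
  -- tail sets
  set Ts : Finset ℕ → Set ℕ := fun s => {y ∈ Xstar | ∀ a ∈ s, a < y} with hTs
  have hTsInf : ∀ s, (Ts s).Infinite := by
    intro s
    refine Set.Infinite.mono ?_ (infinite_above hXstarInf (s.sup id))
    intro y hy
    exact ⟨hy.1, fun a ha => lt_of_le_of_lt (Finset.le_sup (f := id) ha) hy.2⟩
  have hTsXstar : ∀ s, Ts s ⊆ Xstar := fun s y hy => hy.1
  -- decisions transported to tails
  have hdec : ∀ s : Finset ℕ, (s : Set ℕ) ⊆ Xstar → s.Nonempty →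
      acc S s (Ts s) ∨ rej S s (Ts s) := by
    intro s hs hne
    obtain ⟨k, hk⟩ := Set.mem_range.1 (hs (s.max'_mem hne))
    have hsub : Ts s ⊆ (st (k+1)).val.1 := by
      rintro y ⟨⟨j, rfl⟩, hy⟩
      have : xs k < xs j := by rw [hk]; exact hy _ (s.max'_mem hne)
      have hj : k < j := hxsmono.lt_iff_lt.1 this
      exact hmono (k+1) j (by omega) (hxsmem j)
    have hsF : s ⊆ (st (k+1)).val.2 := by
      intro a ha
      obtain ⟨i, hi⟩ := Set.mem_range.1 (hs ha)
      have : xs i ≤ xs k := by rw [hk, hi]; exact s.le_max' a ha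
      have : i ≤ k := hxsmono.le_iff_le.1 this
      have : a ∈ ((st (k+1)).val.2 : Set ℕ) := by
        rw [hF (k+1)]; exact ⟨i, by omega, hi⟩
      exact this
    rcases (spec k).2.2.2 s (Finset.mem_powerset.2 hsF) with h | h
    · exact Or.inl (acc_mono S hsub h)
    · exact Or.inr (rej_mono S hsub h)
  have hrejempty : rej S ∅ Xstar := rej_mono S hXstarM0 hrej
  -- Z-finiteness
  have hZfin : ∀ s : Finset ℕ, (s : Set ℕ) ⊆ Xstar → rej S s (Ts s) →
      {y ∈ Ts s | acc S (insert y s) (Ts (insert y s))}.Finite := by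
    intro s hs hrej'
    by_contra hinf
    set Z := {y ∈ Ts s | acc S (insert y s) (Ts (insert y s))} with hZ
    have haccZ : acc S s Z := by
      intro Y hY hYinf
      set y0 := sInf Y with hy0
      have hy0Y : y0 ∈ Y := Nat.sInf_mem hYinf.nonempty
      have hy0Z : y0 ∈ Z := hY hy0Y
      set Y' := {z ∈ Y | y0 < z} with hY'
      have hY'inf : Y'.Infinite := infinite_above hYinf y0
      have hY'sub : Y' ⊆ Ts (insert y0 s) := by
        rintro z ⟨hzY, hz⟩
        have hzZ := hY hzY
        refine ⟨hzZ.1.1, ?_⟩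
        intro a ha
        rcases Finset.mem_insert.1 ha with rfl | ha
        · exact hz
        · exact hzZ.1.2 a ha
      obtain ⟨e, he1, he2⟩ := hy0Z.2 Y' hY'sub hY'inf
      refine ⟨insert y0 e, ⟨?_, ?_⟩, ?_⟩
      · intro x hx
        rcases Finset.mem_insert.1 (by exact_mod_cast hx) with rfl | hx
        · exact hy0Y
        · exact (he1.1 hx).1
      · intro x hx y hy hyne
        rcases Finset.mem_insert.1 hx with rfl | hx
        · have h1 : y0 ≤ y := Nat.sInf_le hy
          have h2 : y ≠ y0 := fun h => hyne (by rw [h]; exact Finset.mem_insert_self _ _)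
          omega
        · have hy0y : y0 < y := by
            have h1 : y0 ≤ y := Nat.sInf_le hy
            have h2 : y ≠ y0 := fun h => hyne (by rw [h]; exact Finset.mem_insert_self _ _)
            omega
          have hyY' : y ∈ Y' := ⟨hy, hy0y⟩
          have hyne' : y ∉ e := fun h => hyne (Finset.mem_insert_of_mem h)
          exact he1.2 x hx y hyY' hyne'
      · have : s ∪ insert y0 e = insert y0 s ∪ e := by
          ext a
          simp only [Finset.mem_union, Finset.mem_insert]
          tauto
        rw [this]; exact he2
    exact hrej' Z (fun y hy => hy.1) hinf haccZ
  -- stage 2 : thinning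
  have hthin : ∀ G : {G : Finset ℕ // (G : Set ℕ) ⊆ Xstar ∧
      ∀ s ∈ G.powerset, rej S s (Ts s)},
      ∃ G' : {G : Finset ℕ // (G : Set ℕ) ⊆ Xstar ∧ ∀ s ∈ G.powerset, rej S s (Ts s)},
      ∃ y, G'.val = insert y G.val ∧ y ∈ Xstar ∧ ∀ x ∈ G.val, x < y := by
    rintro ⟨G, hGX, hGrej⟩
    set bad : Set ℕ := ⋃ s ∈ G.powerset, {y ∈ Ts s | acc S (insert y s) (Ts (insert y s))}
      with hbad
    have hbadfin : bad.Finite := by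
      apply Set.Finite.biUnion (G.powerset.finite_toSet)
      intro s hs
      apply hZfin s ?_ (hGrej s hs)
      exact fun a ha => hGX ((Finset.mem_powerset.1 hs) ha)
    have : ((Xstar \ bad) ∩ {y | G.sup id < y}).Infinite := by
      have h1 : (Xstar \ bad).Infinite := hXstarInf.diff hbadfin
      have := infinite_above h1 (G.sup id)
      refine this.mono ?_
      intro y hy; exact ⟨hy.1, hy.2⟩
    obtain ⟨y, hy⟩ := this.nonempty
    have hyX : y ∈ Xstar := hy.1.1
    have hybad : y ∉ bad := hy.1.2
    have hyG : ∀ x ∈ G, x < y := fun x hx =>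
      lt_of_le_of_lt (Finset.le_sup (f := id) hx) hy.2
    refine ⟨⟨insert y G, ?_, ?_⟩, y, rfl, hyX, hyG⟩
    · intro a ha
      rcases Finset.mem_insert.1 (by exact_mod_cast ha) with rfl | ha
      · exact hyX
      · exact hGX ha
    · intro s hs
      have hs' := Finset.mem_powerset.1 hs
      by_cases hys : y ∈ s
      · -- s = insert y (s.erase y)
        set t := s.erase y with ht
        have htG : t ⊆ G := by
          intro a ha
          have := hs' (Finset.mem_of_mem_erase ha)
          rcases Finset.mem_insert.1 this with rfl | h
          · exact absurd rfl (Finset.ne_of_mem_erase ha)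
          · exact h
        have hst : s = insert y t := by
          rw [ht, Finset.insert_erase hys]
        have hsX : (s : Set ℕ) ⊆ Xstar := by
          intro a ha
          have ha' : a ∈ s := by exact_mod_cast ha
          rcases Finset.mem_insert.1 (hs' ha') with rfl | h
          · exact hyX
          · exact hGX h
        have hsne : s.Nonempty := ⟨y, hys⟩
        rcases hdec s hsX hsne with hacc | hrej'
        · exfalso
          apply hybad
          rw [hbad]
          refine Set.mem_biUnion (Finset.mem_powerset.2 htG) ?_
          refine ⟨⟨hyX, ?_⟩, ?_⟩
          · intro a ha
            exact hyG a (htG ha)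
          · rw [← hst]; exact hacc
        · exact hrej'
      · have : s ⊆ G := by
          intro a ha
          rcases Finset.mem_insert.1 (hs' ha) with rfl | h
          · exact absurd ha hys
          · exact h
        exact hGrej s (Finset.mem_powerset.2 this)
  set Gs : ℕ → {G : Finset ℕ // (G : Set ℕ) ⊆ Xstar ∧ ∀ s ∈ G.powerset, rej S s (Ts s)} :=
    chainRec (fun G => hthin G) ⟨∅, by simp, by
      intro s hs
      have : s = ∅ := Finset.mem_powerset.1 hs |> fun h => Finset.subset_empty.1 h
      subst this
      refine rej_mono S (hTsXstar ∅) hrejempty⟩ with hGs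
  have Gspec := chainRec_spec (fun G => hthin G)
    (⟨∅, by simp, by
      intro s hs
      have : s = ∅ := Finset.mem_powerset.1 hs |> fun h => Finset.subset_empty.1 h
      subst this
      refine rej_mono S (hTsXstar ∅) hrejempty⟩ :
      {G : Finset ℕ // (G : Set ℕ) ⊆ Xstar ∧ ∀ s ∈ G.powerset, rej S s (Ts s)})
  have hGcard : ∀ n, n ≤ (Gs n).val.card := by
    intro n
    induction n with
    | zero => omega
    | succ n ih =>
      obtain ⟨y, hy1, hy2, hy3⟩ := Gspec n
      have hynot : y ∉ (Gs n).val := fun h => lt_irrefl y (hy3 y h)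
      rw [hy1, Finset.card_insert_of_notMem hynot]
      omega
  have hGmono : ∀ m n, m ≤ n → (Gs m).val ⊆ (Gs n).val := by
    intro m n h
    induction n with
    | zero =>
      have hm : m = 0 := by omega
      subst hm; exact Finset.Subset.refl _
    | succ n ih =>
      rcases Nat.lt_or_ge m (n+1) with h' | h'
      · obtain ⟨y, hy1, _, _⟩ := Gspec n
        rw [hy1]
        exact (ih (by omega)).trans (Finset.subset_insert _ _)
      · have hm : m = n + 1 := by omega
        subst hm; exact Finset.Subset.refl _
  set Xfin : Set ℕ := ⋃ n, ((Gs n).val : Set ℕ) with hXfin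
  have hXfinInf : Xfin.Infinite := infinite_iUnion_finsets hGcard
  have hXfinXstar : Xfin ⊆ Xstar := by
    intro y hy
    obtain ⟨n, hn⟩ := Set.mem_iUnion.1 hy
    exact (Gs n).2.1 hn
  refine ⟨Xfin, hXfinXstar.trans hXstarM0, hXfinInf, ?_⟩
  intro s hs hsS
  obtain ⟨n, hn⟩ := finset_subset_of_subset_iUnion hGmono s hs
  have hrejs : rej S s (Ts s) := (Gs n).2.2 s (Finset.mem_powerset.2 hn)
  have haccs : acc S s (Ts s) := by
    intro Y hY hYinf
    refine ⟨∅, ⟨by simp, by simp⟩, by simpa⟩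
  exact hrejs (Ts s) (le_refl _) (hTsInf s) haccs

/-- Galvin's lemma. -/
theorem galvin (S : Set (Finset ℕ)) (M : Set ℕ) (hM : M.Infinite) :
    ∃ X, X ⊆ M ∧ X.Infinite ∧
      ((∀ Y, Y ⊆ X → Y.Infinite → ∃ e ∈ S, InitSegSet e Y) ∨
       (∀ s : Finset ℕ, (s : Set ℕ) ⊆ X → s ∉ S)) := by
  rcases decide_one S ∅ M hM with ⟨N, h1, h2, h3 | h3⟩
  · refine ⟨N, h1, h2, Or.inl ?_⟩
    intro Y hY hYinf
    obtain ⟨e, he1, he2⟩ := h3 Y hY hYinf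
    exact ⟨e, by simpa using he2, he1⟩
  · obtain ⟨X, hX1, hX2, hX3⟩ := galvin_rej N h2 h3
    exact ⟨X, hX1.trans h1, hX2, Or.inr hX3⟩

end Galvin

end Stmt2Aux
namespace Stmt2Aux

/-- Stabilization of a finitely-valued, locally determined colouring. -/
theorem stabilize_aux {ι : Type*} : ∀ n : ℕ, ∀ V : Set ι, V.Finite → V.ncard = n →
    ∀ X : Set ℕ, X.Infinite → ∀ C : Set ℕ → ι,
    (∀ W, W ⊆ X → W.Infinite → C W ∈ V) →
    (∀ W, W ⊆ X → W.Infinite → ∃ p : Finset ℕ, InitSegSet p W ∧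
        ∀ W', W' ⊆ X → W'.Infinite → InitSegSet p W' → C W' = C W) →
    ∃ X' i, X' ⊆ X ∧ X'.Infinite ∧ ∀ W, W ⊆ X' → W.Infinite → C W = i := by
  intro n
  induction n with
  | zero =>
    intro V hV hcard X hX C hCV _
    have hVempty : V = ∅ := (Set.ncard_eq_zero hV).1 hcard
    subst hVempty
    exact absurd (hCV X (le_refl _) hX) (Set.notMem_empty _)
  | succ n ih =>
    intro V hV hcard X hX C hCV hloc
    have hVne : V.Nonempty := by
      rw [Set.nonempty_iff_ne_empty]
      intro h; subst h; simp at hcard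
    obtain ⟨i, hi⟩ := hVne
    set V' := V \ {i} with hV'def
    have hV' : V'.Finite := hV.diff
    have hcard' : V'.ncard = n := by
      rw [hV'def, Set.ncard_diff_singleton_of_mem hi]
      omega
    obtain ⟨X1, hX1sub, hX1inf, halt⟩ := galvin {p : Finset ℕ | (p : Set ℕ) ⊆ X ∧
      ∀ W', W' ⊆ X → W'.Infinite → InitSegSet p W' → C W' = i} X hX
    rcases halt with h | h
    · refine ⟨X1, i, hX1sub, hX1inf, ?_⟩
      intro W hW hWinf
      obtain ⟨e, he1, he2⟩ := h W hW hWinf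
      exact he1.2 W ((hW.trans hX1sub)) hWinf he2
    · have hC' : ∀ W, W ⊆ X1 → W.Infinite → C W ∈ V' := by
        intro W hW hWinf
        have hmem := hCV W (hW.trans hX1sub) hWinf
        refine ⟨hmem, ?_⟩
        simp only [Set.mem_singleton_iff]
        intro heq
        obtain ⟨p, hp1, hp2⟩ := hloc W (hW.trans hX1sub) hWinf
        refine h p (hp1.1.trans hW) ⟨hp1.1.trans (hW.trans hX1sub), ?_⟩
        intro W' a b c
        exact (hp2 W' a b c).trans heq
      have hloc' : ∀ W, W ⊆ X1 → W.Infinite → ∃ p : Finset ℕ, InitSegSet p W ∧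
          ∀ W', W' ⊆ X1 → W'.Infinite → InitSegSet p W' → C W' = C W := by
        intro W hW hWinf
        obtain ⟨p, hp1, hp2⟩ := hloc W (hW.trans hX1sub) hWinf
        exact ⟨p, hp1, fun W' a b c => hp2 W' (a.trans hX1sub) b c⟩
      obtain ⟨X', i', h1, h2, h3⟩ := ih V' hV' hcard' X1 hX1inf C hC' hloc'
      exact ⟨X', i', h1.trans hX1sub, h2, h3⟩

/-- Stabilization of a finitely-valued, locally determined colouring. -/
theorem stabilize {ι : Type*} (V : Set ι) (hV : V.Finite)
    (X : Set ℕ) (hX : X.Infinite) (C : Set ℕ → ι)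
    (hCV : ∀ W, W ⊆ X → W.Infinite → C W ∈ V)
    (hloc : ∀ W, W ⊆ X → W.Infinite → ∃ p : Finset ℕ, InitSegSet p W ∧
        ∀ W', W' ⊆ X → W'.Infinite → InitSegSet p W' → C W' = C W) :
    ∃ X' i, X' ⊆ X ∧ X'.Infinite ∧ ∀ W, W ⊆ X' → W.Infinite → C W = i :=
  stabilize_aux V.ncard V hV rfl X hX C hCV hloc

end Stmt2Aux
namespace Stmt2Aux

section Wqo

variable {P : Type*} [PartialOrder P]

/-- partial well ordering: every sequence has a good pair -/
theorem pwo (hwqo : IsWqo ((· ≤ ·) : P → P → Prop)) (g : ℕ → P) :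
    ∃ i j, i < j ∧ g i ≤ g j := by
  by_contra H
  push_neg at H
  have H' : ∀ i j, i < j → ¬ g i ≤ g j := fun i j h => H i j h
  have hstep : ∀ A : {A : Set ℕ // A.Infinite}, ∃ B : {A : Set ℕ // A.Infinite},
      B.val ⊆ A.val ∧ (∀ b ∈ B.val, sInf A.val < b) ∧
      ((∀ b ∈ B.val, g b ≤ g (sInf A.val)) ∨ (∀ b ∈ B.val, ¬ g b ≤ g (sInf A.val))) := by
    rintro ⟨A, hA⟩
    set i := sInf A with hi
    set A1 := {j ∈ A | i < j ∧ g j ≤ g i} with hA1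
    set A2 := {j ∈ A | i < j ∧ ¬ g j ≤ g i} with hA2
    have hsplit : {j ∈ A | i < j} ⊆ A1 ∪ A2 := by
      intro j hj
      by_cases h : g j ≤ g i
      · exact Or.inl ⟨hj.1, hj.2, h⟩
      · exact Or.inr ⟨hj.1, hj.2, h⟩
    have hinf : (A1 ∪ A2).Infinite := (infinite_above hA i).mono hsplit
    rcases Set.infinite_union.1 hinf with h | h
    · exact ⟨⟨A1, h⟩, fun j hj => hj.1, fun j hj => hj.2.1, Or.inl (fun j hj => hj.2.2)⟩
    · exact ⟨⟨A2, h⟩, fun j hj => hj.1, fun j hj => hj.2.1, Or.inr (fun j hj => hj.2.2)⟩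
  set st := chainRec hstep ⟨Set.univ, Set.infinite_univ⟩ with hst
  have spec := chainRec_spec hstep (⟨Set.univ, Set.infinite_univ⟩ : {A : Set ℕ // A.Infinite})
  set a : ℕ → ℕ := fun n => sInf (st n).val with ha
  have hamem : ∀ n, a n ∈ (st n).val := fun n => Nat.sInf_mem (st n).2.nonempty
  have hmono1 : ∀ n, (st (n+1)).val ⊆ (st n).val := fun n => (spec n).1
  have hmono : ∀ m n, m ≤ n → (st n).val ⊆ (st m).val := by
    intro m n h
    induction n with
    | zero =>
      have hm : m = 0 := by omega
      subst hm; exact le_refl _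
    | succ n ih =>
      rcases Nat.lt_or_ge m (n+1) with h' | h'
      · exact (hmono1 n).trans (ih (by omega))
      · have hm : m = n + 1 := by omega
        subst hm; exact le_refl _
  have halt : ∀ n, a n < a (n+1) := fun n => (spec n).2.1 _ (hamem (n+1))
  have hamono : StrictMono a := strictMono_nat_of_lt_succ halt
  have hkey : ∀ m n, m < n → a n ∈ (st (m+1)).val := by
    intro m n hmn
    exact hmono (m+1) n (by omega) (hamem n)
  set cset := {m : ℕ | ∀ b ∈ (st (m+1)).val, g b ≤ g (a m)} with hcset
  have hcover : ∀ m, m ∈ cset ∨ (∀ b ∈ (st (m+1)).val, ¬ g b ≤ g (a m)) := by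
    intro m
    rcases (spec m).2.2 with h | h
    · exact Or.inl h
    · exact Or.inr h
  have huniv : (cset ∪ csetᶜ).Infinite := by
    rw [Set.union_compl_self]; exact Set.infinite_univ
  rcases Set.infinite_union.1 huniv with hinf | hinf
  · set φ := enum cset with hφ
    have hφmono := enum_strictMono hinf
    have hφmem : ∀ k, φ k ∈ cset := fun k => enum_mem' hinf k
    refine hwqo.1 ⟨fun k => g (a (φ k)), ?_⟩
    intro k
    have h1 : φ k < φ (k+1) := hφmono (by omega)
    constructor
    · exact hφmem k _ (hkey (φ k) (φ (k+1)) h1)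
    · exact H' (a (φ k)) (a (φ (k+1))) (hamono h1)
  · set φ := enum csetᶜ with hφ
    have hφmono := enum_strictMono hinf
    have hφmem : ∀ k, φ k ∈ csetᶜ := fun k => enum_mem' hinf k
    refine hwqo.2 ⟨fun k => g (a (φ k)), ?_⟩
    intro m n hmn
    rcases Nat.lt_or_ge m n with h | h
    · exact H' _ _ (hamono (hφmono h))
    · have h' : n < m := by omega
      have hE : ∀ b ∈ (st (φ n + 1)).val, ¬ g b ≤ g (a (φ n)) := by
        rcases hcover (φ n) with hc | hc
        · exact absurd hc (hφmem n)
        · exact hc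
      exact hE _ (hkey (φ n) (φ m) (hφmono h'))

/-- every infinite subset contains a strictly increasing chain -/
theorem exists_chain_of_infinite (hwqo : IsWqo ((· ≤ ·) : P → P → Prop))
    (S : Set P) (hS : S.Infinite) :
    ∃ c : ℕ → P, (∀ n, c n ∈ S) ∧ ∀ n, c n ≤ c (n+1) ∧ c n ≠ c (n+1) := by
  classical
  set e := hS.natEmbedding with he
  set g : ℕ → P := fun n => (e n : P) with hg
  have hginj : Function.Injective g := fun m n h => e.injective (Subtype.ext h)
  have hgmem : ∀ n, g n ∈ S := fun n => (e n).2
  set Bad := {i : ℕ | ∀ j, i < j → ¬ g i ≤ g j} with hBad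
  have hBadfin : Bad.Finite := by
    by_contra hinf
    have hinf' : Bad.Infinite := hinf
    obtain ⟨i, j, hij, hle⟩ := pwo hwqo (fun k => g (enum Bad k))
    have hmem : enum Bad i ∈ Bad := enum_mem' hinf' i
    exact hmem _ ((enum_strictMono hinf') hij) hle
  obtain ⟨N, hN⟩ : ∃ N, ∀ i ∈ Bad, i < N := by
    rcases hBadfin.bddAbove with ⟨N, hN⟩
    exact ⟨N+1, fun i hi => by have := hN hi; omega⟩
  have hstep : ∀ i : {i : ℕ // N ≤ i}, ∃ j : {i : ℕ // N ≤ i},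
      i.val < j.val ∧ g i.val ≤ g j.val := by
    rintro ⟨i, hi⟩
    have hnb : ¬ ∀ j, i < j → ¬ g i ≤ g j := fun h => by
      have := hN i h; omega
    push_neg at hnb
    obtain ⟨j, hij, hle⟩ := hnb
    exact ⟨⟨j, by omega⟩, hij, hle⟩
  set idx := chainRec hstep ⟨N, le_refl N⟩ with hidx
  have spec : ∀ n, (idx n).val < (idx (n+1)).val ∧ g (idx n).val ≤ g (idx (n+1)).val :=
    fun n => chainRec_spec hstep (⟨N, le_refl N⟩ : {i : ℕ // N ≤ i}) n
  refine ⟨fun n => g (idx n).val, fun n => hgmem _, fun n => ⟨(spec n).2, ?_⟩⟩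
  intro heq
  have := hginj heq
  have := (spec n).1
  omega

/-- non-principal ideals possessing a strictly increasing cofinal chain -/
def chainIdeals (P : Type*) [PartialOrder P] : Set (Set P) :=
  {I | (IsIdealRel (· ≤ ·) I ∧ ¬ IsPrincipalRel (· ≤ ·) I) ∧
    ∃ c : ℕ → P, (∀ n, c n ∈ I) ∧ (∀ n, c n ≤ c (n+1) ∧ c n ≠ c (n+1)) ∧
      ∀ p ∈ I, ∃ n, p ≤ c n}

theorem chainIdeals_finite
    (hfin : {I : Set P | IsIdealRel (· ≤ ·) I ∧ ¬ IsPrincipalRel (· ≤ ·) I}.Finite) :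
    (chainIdeals P).Finite := hfin.subset (fun _ hI => hI.1)

theorem chain_le {c : ℕ → P} (hc : ∀ n, c n ≤ c (n+1) ∧ c n ≠ c (n+1)) :
    ∀ m n, m ≤ n → c m ≤ c n := by
  intro m n h
  exact monotone_nat_of_le_succ (fun k => (hc k).1) h

theorem downset_chain_mem (c : ℕ → P) (hc : ∀ n, c n ≤ c (n+1) ∧ c n ≠ c (n+1)) :
    {p | ∃ n, p ≤ c n} ∈ chainIdeals P := by
  refine ⟨⟨⟨⟨c 0, 0, le_refl _⟩, ?_, ?_⟩, ?_⟩, c, fun n => ⟨n, le_refl _⟩, hc,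
    fun p hp => hp⟩
  · rintro x y hxy ⟨n, hn⟩; exact ⟨n, hxy.trans hn⟩
  · rintro x ⟨n, hn⟩ y ⟨m, hm⟩
    refine ⟨c (max n m), ⟨max n m, le_refl _⟩, hn.trans (chain_le hc _ _ ?_),
      hm.trans (chain_le hc _ _ ?_)⟩
    · exact le_max_left _ _
    · exact le_max_right _ _
  · rintro ⟨a, ⟨n, han⟩, ha⟩
    have h1 : c (n+1) ≤ a := ha _ ⟨n+1, le_refl _⟩
    have h2 : c (n+1) ≤ c n := h1.trans han
    exact (hc n).2 (le_antisymm (hc n).1 h2)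

/-- the set of points in no chain-ideal -/
def T0 (P : Type*) [PartialOrder P] : Set P := {p | ∀ I ∈ chainIdeals P, p ∉ I}

theorem T0_finite (hwqo : IsWqo ((· ≤ ·) : P → P → Prop)) : (T0 P).Finite := by
  by_contra h
  have hinf : (T0 P).Infinite := h
  obtain ⟨c, hcmem, hc⟩ := exists_chain_of_infinite hwqo _ hinf
  have hmem : {p | ∃ n, p ≤ c n} ∈ chainIdeals P := downset_chain_mem c hc
  exact hcmem 0 _ hmem ⟨0, le_refl _⟩

end Wqo

end Stmt2Aux
namespace Stmt2Aux

section Core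

variable {P : Type*} [PartialOrder P]

/-- A level: an abstract comb structure with values. -/
structure Lv (P : Type*) [PartialOrder P] (v : Set ℕ → P) where
  X : Set ℕ
  hX : X.Infinite
  σ : Set ℕ → Finset ℕ
  hne : ∀ W, W ⊆ X → W.Infinite → (σ W).Nonempty
  hseg : ∀ W, W ⊆ X → W.Infinite → InitSegSet (σ W) W
  hloc : ∀ W, W ⊆ X → W.Infinite → ∀ W', W' ⊆ X → W'.Infinite →
      InitSegSet (σ W) W' → σ W' = σ W ∧ v W' = v W
  hanti : ∀ W, W ⊆ X → W.Infinite → ∀ W', W' ⊆ X → W'.Infinite →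
      σ W ⊆ σ W' → σ W = σ W'
  hbad : ∀ W, W ⊆ X → W.Infinite → ¬ v W ≤ v (tl W)

end Core

end Stmt2Aux
namespace Stmt2Aux

section Step

variable {P : Type*} [PartialOrder P]

theorem sInf_eq {V : Set ℕ} {m : ℕ} (hm : m ∈ V) (hle : ∀ y ∈ V, m ≤ y) : sInf V = m :=
  le_antisymm (Nat.sInf_le hm) (hle _ (Nat.sInf_mem ⟨m, hm⟩))

theorem step_lemma (hwqo : IsWqo ((· ≤ ·) : P → P → Prop))
    (hfin : {I : Set P | IsIdealRel (· ≤ ·) I ∧ ¬ IsPrincipalRel (· ≤ ·) I}.Finite)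
    (v : Set ℕ → P) (L : Lv P v) :
    ∃ a ∈ L.X, ∃ L' : Lv P v, L'.X ⊆ L.X ∧ (∀ y ∈ L'.X, a < y) ∧
      ∀ W, W ⊆ L'.X → W.Infinite → L'.σ W = (L.σ (insert a W)).erase a := by
  classical
  obtain ⟨X, hX, σ, hne, hseg, hloc, hanti, hbad⟩ := L
  simp only [] at *
  ------------------------------------------------------------------
  -- Part 1 : singletons
  ------------------------------------------------------------------
  set Sing := {x : ℕ | ∃ W, W ⊆ X ∧ W.Infinite ∧ σ W = {x}} with hSingdef
  have hSingX : Sing ⊆ X := by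
    rintro x ⟨W, hWX, hWinf, hW⟩
    apply hWX
    have hx : x ∈ σ W := by rw [hW]; exact Finset.mem_singleton_self x
    exact (hseg W hWX hWinf).1 (by exact_mod_cast hx)
  have hSingFin : Sing.Finite := by
    by_contra h
    have hinf : Sing.Infinite := h
    set xs := enum Sing with hxs
    have hxmem : ∀ k, xs k ∈ Sing := fun k => enum_mem' hinf k
    have hxmono := enum_strictMono hinf
    set Tail : ℕ → Set ℕ := fun l => {y ∈ Sing | xs l ≤ y} with hTail
    have hTailinf : ∀ l, (Tail l).Infinite := by
      intro l
      refine ((infinite_above hinf (xs l)).mono ?_)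
      intro y hy; exact ⟨hy.1, le_of_lt hy.2⟩
    have hTailX : ∀ l, Tail l ⊆ X := fun l y hy => hSingX hy.1
    have hwit : ∀ k, ∃ W0, W0 ⊆ X ∧ W0.Infinite ∧ σ W0 = {xs k} := fun k => hxmem k
    set u : ℕ → P := fun k => v (Classical.choose (hwit k)) with hu
    have hval : ∀ k W, W ⊆ X → W.Infinite → xs k ∈ W → (∀ y ∈ W, y ≠ xs k → xs k < y) →
        v W = u k := by
      intro k W h1 h2 h3 h4
      obtain ⟨hW0X, hW0inf, hW0σ⟩ := Classical.choose_spec (hwit k)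
      have hseg' : InitSegSet (σ (Classical.choose (hwit k))) W := by
        rw [hW0σ]
        constructor
        · intro z hz
          simp only [Finset.coe_singleton, Set.mem_singleton_iff] at hz
          rw [hz]
          exact h3
        · intro z hz y hy hyne
          have hz' : z = xs k := Finset.mem_singleton.1 hz
          subst hz'
          exact h4 y hy (fun h => hyne (by rw [h]; exact Finset.mem_singleton_self _))
      exact (hloc _ hW0X hW0inf W h1 h2 hseg').2
    have hpairs : ∀ k l, k < l → ¬ u k ≤ u l := by
      intro k l hkl hle
      have hkl' : xs k < xs l := hxmono hkl
      set W := insert (xs k) (Tail l) with hW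
      have hWX : W ⊆ X := by
        intro y hy
        rcases Set.mem_insert_iff.1 hy with rfl | hy
        · exact hSingX (hxmem k)
        · exact hTailX l hy
      have hWinf : W.Infinite := (hTailinf l).mono (Set.subset_insert _ _)
      have hWgt : ∀ y ∈ W, y ≠ xs k → xs k < y := by
        intro y hy hyne
        rcases Set.mem_insert_iff.1 hy with rfl | hy
        · exact absurd rfl hyne
        · calc xs k < xs l := hkl'
            _ ≤ y := hy.2
      have hv1 : v W = u k := hval k W hWX hWinf (Set.mem_insert _ _) hWgt
      have hsInfW : sInf W = xs k := by
        apply sInf_eq (Set.mem_insert _ _)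
        intro y hy
        rcases Set.mem_insert_iff.1 hy with rfl | hy
        · exact le_refl _
        · have := hy.2; omega
      have htlW : tl W = Tail l := by
        rw [tl, hsInfW]
        ext y
        simp only [Set.mem_diff, Set.mem_insert_iff, Set.mem_singleton_iff]
        constructor
        · rintro ⟨rfl | hy, hne'⟩
          · exact absurd rfl hne'
          · exact hy
        · intro hy
          refine ⟨Or.inr hy, ?_⟩
          intro h
          have h2 := hy.2
          omega
      have hv2 : v (tl W) = u l := by
        rw [htlW]
        apply hval l _ (hTailX l) (hTailinf l) ⟨hxmem l, le_refl _⟩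
        intro y hy hyne
        exact lt_of_le_of_ne hy.2 (Ne.symm hyne)
      exact hbad W hWX hWinf (by rw [hv1, hv2]; exact hle)
    obtain ⟨i, j, hij, hle⟩ := pwo hwqo u
    exact hpairs i j hij hle
  set X1 := X \ Sing with hX1def
  have hX1inf : X1.Infinite := hX.diff hSingFin
  have hX1X : X1 ⊆ X := Set.diff_subset
  have hnosing : ∀ W, W ⊆ X1 → W.Infinite → ∀ x, σ W ≠ {x} := by
    intro W h1 h2 x hx
    have hxW : x ∈ W := (hseg W (h1.trans hX1X) h2).1 (by rw [hx]; simp)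
    exact (h1 hxW).2 ⟨W, h1.trans hX1X, h2, hx⟩
  have hhdne : ∀ W, W ⊆ X1 → W.Infinite → ∃ b ∈ σ W, b ≠ sInf W := by
    intro W h1 h2
    by_contra h
    push_neg at h
    apply hnosing W h1 h2 (sInf W)
    apply Finset.eq_singleton_iff_unique_mem.2
    exact ⟨iseg_sInf_mem (hseg W (h1.trans hX1X) h2) (hne W (h1.trans hX1X) h2), h⟩
  ------------------------------------------------------------------
  -- Part 2 : pattern stabilization
  ------------------------------------------------------------------
  set pat : P → Set (Set P) := fun p => {I | I ∈ chainIdeals P ∧ p ∈ I} with hpatdef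
  set C1 : Set ℕ → (P ⊕ Set (Set P)) := fun W =>
    if pat (v W) = ∅ then Sum.inl (v W) else Sum.inr (pat (v W)) with hC1def
  have hC1V : ∀ W, W ⊆ X1 → W.Infinite →
      C1 W ∈ (Sum.inl '' T0 P ∪ Sum.inr '' {A : Set (Set P) | A ⊆ chainIdeals P}) := by
    intro W _ _
    by_cases h : pat (v W) = ∅
    · left
      refine ⟨v W, ?_, by rw [hC1def]; simp only []; rw [if_pos h]⟩
      intro I hI hvI
      have hmem : I ∈ pat (v W) := ⟨hI, hvI⟩
      rw [h] at hmem; exact hmem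
    · right
      exact ⟨pat (v W), fun I hI => hI.1, by rw [hC1def]; simp only []; rw [if_neg h]⟩
  have hVfin : (Sum.inl '' T0 P ∪
      Sum.inr '' {A : Set (Set P) | A ⊆ chainIdeals P}).Finite :=
    ((T0_finite hwqo).image _).union (((chainIdeals_finite hfin).finite_subsets).image _)
  have hC1loc : ∀ W, W ⊆ X1 → W.Infinite → ∃ p : Finset ℕ, InitSegSet p W ∧
      ∀ W', W' ⊆ X1 → W'.Infinite → InitSegSet p W' → C1 W' = C1 W := by
    intro W h1 h2
    refine ⟨σ W, hseg W (h1.trans hX1X) h2, ?_⟩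
    intro W' h1' h2' hseg'
    have hv := (hloc W (h1.trans hX1X) h2 W' (h1'.trans hX1X) h2' hseg').2
    rw [hC1def]; simp only []; rw [hv]
  obtain ⟨X2, i1, hX2sub, hX2inf, hc1⟩ := stabilize _ hVfin X1 hX1inf C1 hC1V hC1loc
  have hX2X : X2 ⊆ X := hX2sub.trans hX1X
  have hC1inl : ∀ W p, C1 W = Sum.inl p → v W = p := by
    intro W p hW
    rw [hC1def] at hW; simp only [] at hW
    by_cases hcase : pat (v W) = ∅
    · rw [if_pos hcase] at hW; exact Sum.inl.inj hW
    · rw [if_neg hcase] at hW; exact absurd hW (by simp)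
  have hC1inr : ∀ W A, C1 W = Sum.inr A → pat (v W) = A := by
    intro W A hW
    rw [hC1def] at hW; simp only [] at hW
    by_cases hcase : pat (v W) = ∅
    · rw [if_pos hcase] at hW; exact absurd hW (by simp)
    · rw [if_neg hcase] at hW; exact Sum.inr.inj hW
  rcases i1 with p0 | A0
  · exfalso
    have e1 := hC1inl X2 p0 (hc1 X2 (le_refl _) hX2inf)
    have e2 := hC1inl (tl X2) p0 (hc1 (tl X2) (tl_subset _) (tl_infinite hX2inf))
    exact hbad X2 hX2X hX2inf (by rw [e1, e2])
  have hpat : ∀ W, W ⊆ X2 → W.Infinite → pat (v W) = A0 :=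
    fun W h1 h2 => hC1inr W A0 (hc1 W h1 h2)
  ------------------------------------------------------------------
  -- Part 3 : first relation stabilization
  ------------------------------------------------------------------
  set C2 : Set ℕ → Bool := fun W => if v (tl W) ≤ v W then true else false with hC2def
  have hC2loc : ∀ W, W ⊆ X2 → W.Infinite → ∃ p : Finset ℕ, InitSegSet p W ∧
      ∀ W', W' ⊆ X2 → W'.Infinite → InitSegSet p W' → C2 W' = C2 W := by
    intro W h1 h2
    have h1X : W ⊆ X := h1.trans hX2X
    have htlX : tl W ⊆ X := (tl_subset W).trans h1X
    have htlinf := tl_infinite h2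
    have hsW := hseg W h1X h2
    have hsT := hseg (tl W) htlX htlinf
    have hmW : sInf W ∈ W := Nat.sInf_mem h2.nonempty
    have hmσ : sInf W ∈ σ W := iseg_sInf_mem hsW (hne W h1X h2)
    set p := σ W ∪ σ (tl W) with hp
    have hpseg : InitSegSet p W := by
      constructor
      · intro x hx
        rcases Finset.mem_union.1 (by exact_mod_cast hx) with hx | hx
        · exact hsW.1 hx
        · exact (tl_subset W) (hsT.1 hx)
      · intro x hx y hy hyp
        have hyσW : y ∉ σ W := fun h => hyp (Finset.mem_union_left _ h)
        have hyσT : y ∉ σ (tl W) := fun h => hyp (Finset.mem_union_right _ h)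
        rcases Finset.mem_union.1 hx with hx | hx
        · exact hsW.2 x hx y hy hyσW
        · have hym : y ≠ sInf W := fun h => hyσW (by rw [h]; exact hmσ)
          exact hsT.2 x hx y ⟨hy, by simpa using hym⟩ hyσT
    refine ⟨p, hpseg, ?_⟩
    intro W' h1' h2' hpseg'
    have h1X' : W' ⊆ X := h1'.trans hX2X
    have hsWW' : InitSegSet (σ W) W' := by
      constructor
      · intro x hx
        refine hpseg'.1 ?_
        simp only [hp, Finset.coe_union, Set.mem_union]
        exact Or.inl hx
      · intro x hx y hy hyσ
        by_cases hyP : y ∈ p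
        · rcases Finset.mem_union.1 hyP with h | h
          · exact absurd h hyσ
          · exact hsW.2 x hx y ((tl_subset W) (hsT.1 h)) hyσ
        · exact hpseg'.2 x (Finset.mem_union_left _ hx) y hy hyP
    obtain ⟨hσeq, hveq⟩ := hloc W h1X h2 W' h1X' h2' hsWW'
    have hminf' : sInf W' = sInf W := by
      apply sInf_eq
      · refine hpseg'.1 ?_
        simp only [hp, Finset.coe_union, Set.mem_union]
        exact Or.inl (by exact_mod_cast hmσ)
      · intro y hy
        by_cases hyP : y ∈ p
        · exact Nat.sInf_le (hpseg.1 (by exact_mod_cast hyP))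
        · have := hpseg'.2 (sInf W) (Finset.mem_union_left _ hmσ) y hy hyP
          omega
    have hsTT' : InitSegSet (σ (tl W)) (tl W') := by
      constructor
      · intro x hx
        have hx' : (x : ℕ) ∈ σ (tl W) := by exact_mod_cast hx
        have hxW' : x ∈ W' := hpseg'.1 (by
          simp only [hp, Finset.coe_union, Set.mem_union]
          exact Or.inr hx)
        have hxtl : (x : ℕ) ∈ tl W := hsT.1 hx
        have hxm : x ≠ sInf W := by
          intro h
          have := sInf_lt_of_mem_tl hxtl
          omega
        rw [tl, hminf']
        exact ⟨hxW', by simpa using hxm⟩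
      · intro x hx y hy hyσ
        have hyW' : y ∈ W' := (tl_subset W') hy
        have hym : y ≠ sInf W := by
          have := sInf_lt_of_mem_tl hy
          rw [hminf'] at this; omega
        by_cases hyP : y ∈ p
        · rcases Finset.mem_union.1 hyP with h | h
          · have hyW : y ∈ W := hsW.1 h
            exact hsT.2 x hx y ⟨hyW, by simpa using hym⟩ hyσ
          · exact absurd h hyσ
        · exact hpseg'.2 x (Finset.mem_union_right _ hx) y hyW' hyP
    obtain ⟨hσeq', hveq'⟩ := hloc (tl W) htlX htlinf (tl W')
      ((tl_subset W').trans h1X') (tl_infinite h2') hsTT'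
    rw [hC2def]; simp only []
    rw [hveq, hveq']
  obtain ⟨X3, b2, hX3sub, hX3inf, hc2⟩ := stabilize (Set.univ : Set Bool) (Set.finite_univ)
    X2 hX2inf C2 (fun _ _ _ => Set.mem_univ _) hC2loc
  have hX3X : X3 ⊆ X := hX3sub.trans hX2X
  have hX3X1 : X3 ⊆ X1 := hX3sub.trans hX2sub
  have hX3X2 : X3 ⊆ X2 := hX3sub
  have hinc : ∀ W, W ⊆ X3 → W.Infinite → ¬ v (tl W) ≤ v W := by
    intro W h1 h2 hle
    have hb : b2 = true := by
      have hcc := hc2 W h1 h2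
      rw [hC2def] at hcc; simp only [] at hcc
      rw [if_pos hle] at hcc; exact hcc.symm
    refine hwqo.1 ⟨fun k => v (peel X3 k), ?_⟩
    intro k
    have hk1 : peel X3 k ⊆ X3 := peel_subset _ _
    have hk2 : (peel X3 k).Infinite := peel_infinite hX3inf k
    have hck := hc2 _ hk1 hk2
    rw [hC2def] at hck; simp only [] at hck
    rw [hb] at hck
    have hle' : v (tl (peel X3 k)) ≤ v (peel X3 k) := by
      by_contra hcon
      rw [if_neg hcon] at hck
      exact Bool.false_ne_true hck
    exact ⟨hle', hbad _ (hk1.trans hX3X) hk2⟩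
  ------------------------------------------------------------------
  -- Part 4 : head lemmas
  ------------------------------------------------------------------
  set hd : Set ℕ → Finset ℕ := fun W => (σ W).erase (sInf W) with hhddef
  have hhdsub : ∀ W, hd W ⊆ σ W := fun W => Finset.erase_subset _ _
  have hhdW : ∀ W, W ⊆ X → W.Infinite → ((hd W : Finset ℕ) : Set ℕ) ⊆ W := by
    intro W h1 h2 x hx
    exact (hseg W h1 h2).1 (by
      exact_mod_cast hhdsub W (by exact_mod_cast hx))
  have hhdgt : ∀ W, W ⊆ X → W.Infinite → ∀ x ∈ hd W, sInf W < x := by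
    intro W h1 h2 x hx
    have hxW : (x : ℕ) ∈ W := hhdW W h1 h2 (by exact_mod_cast hx)
    have hxne : x ≠ sInf W := Finset.ne_of_mem_erase hx
    have := Nat.sInf_le hxW
    omega
  -- hd W is contained in σ (tl W)
  have hhdtl : ∀ W, W ⊆ X1 → W.Infinite → hd W ⊆ σ (tl W) := by
    intro W h1 h2
    have h1X : W ⊆ X := h1.trans hX1X
    have htlX : tl W ⊆ X := (tl_subset W).trans h1X
    have htlinf := tl_infinite h2
    have hsW := hseg W h1X h2
    have hsT := hseg (tl W) htlX htlinf
    have hdseg : InitSegSet (hd W) (tl W) := by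
      constructor
      · intro x hx
        have hx' : (x : ℕ) ∈ hd W := by exact_mod_cast hx
        refine ⟨hhdW W h1X h2 hx, ?_⟩
        have := hhdgt W h1X h2 x hx'
        simp only [Set.mem_singleton_iff]
        omega
      · intro x hx y hy hyh
        have hyW : y ∈ W := (tl_subset W) hy
        by_cases hyσ : y ∈ σ W
        · -- y ∈ σ W, y ∉ hd W, y ∈ tl W so y ≠ sInf W : contradiction
          exfalso
          apply hyh
          refine Finset.mem_erase.2 ⟨?_, hyσ⟩
          have := sInf_lt_of_mem_tl hy
          omega
        · exact hsW.2 x (hhdsub W hx) y hyW hyσ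
    rcases iseg_comp hdseg hsT with h | h
    · exact h
    · exfalso
      have hsub : σ (tl W) ⊆ σ W := h.trans (hhdsub W)
      have heq : σ (tl W) = σ W := hanti (tl W) htlX htlinf W h1X h2 hsub
      have hm : sInf W ∈ σ W := iseg_sInf_mem hsW (hne W h1X h2)
      rw [← heq] at hm
      have : (sInf W : ℕ) ∈ tl W := hsT.1 hm
      have := sInf_lt_of_mem_tl this
      omega
  -- head extension lemma
  have hhdprop : ∀ W, W ⊆ X1 → W.Infinite → ∀ T, T ⊆ X1 → T.Infinite →
      (∀ x ∈ hd W, ∀ y ∈ T, x < y) →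
      hd W ⊆ σ (((hd W : Finset ℕ) : Set ℕ) ∪ T) ∧
      hd W ≠ σ (((hd W : Finset ℕ) : Set ℕ) ∪ T) := by
    intro W h1 h2 T hT1 hT2 hgt
    have h1X : W ⊆ X := h1.trans hX1X
    set G : Set ℕ := ((hd W : Finset ℕ) : Set ℕ) ∪ T with hG
    have hGX : G ⊆ X := by
      intro y hy
      rcases hy with hy | hy
      · exact h1X (hhdW W h1X h2 hy)
      · exact hX1X (hT1 hy)
    have hGinf : G.Infinite := hT2.mono Set.subset_union_right
    obtain ⟨b, hbσ, hbne⟩ := hhdne W h1 h2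
    have hbhd : b ∈ hd W := Finset.mem_erase.2 ⟨hbne, hbσ⟩
    have hmb : sInf W < b := hhdgt W h1X h2 b hbhd
    have hdsegG : InitSegSet (hd W) G := by
      constructor
      · intro x hx
        exact Or.inl hx
      · intro x hx y hy hyh
        rcases hy with hy | hy
        · exact absurd (by exact_mod_cast hy) hyh
        · exact hgt x hx y hy
    have hsG := hseg G hGX hGinf
    have hmnotG : sInf W ∉ G := by
      intro h
      rcases h with h | h
      · have : (sInf W : ℕ) ∈ hd W := by exact_mod_cast h
        have := hhdgt W h1X h2 _ this
        omega
      · have := hgt b hbhd _ h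
        omega
    rcases iseg_comp hdsegG hsG with h | h
    · constructor
      · exact h
      · intro heq
        have hsub : σ G ⊆ σ W := by
          rw [← heq]; exact hhdsub W
        have heq2 : σ G = σ W := hanti G hGX hGinf W h1X h2 hsub
        have hm : sInf W ∈ σ W := iseg_sInf_mem (hseg W h1X h2) (hne W h1X h2)
        rw [← heq2] at hm
        exact hmnotG (hsG.1 hm)
    · exfalso
      have hsub : σ G ⊆ σ W := h.trans (hhdsub W)
      have heq2 : σ G = σ W := hanti G hGX hGinf W h1X h2 hsub
      have hm : sInf W ∈ σ W := iseg_sInf_mem (hseg W h1X h2) (hne W h1X h2)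
      rw [← heq2] at hm
      exact hmnotG (hsG.1 hm)
  ------------------------------------------------------------------
  -- Part 5 : second relation stabilization
  ------------------------------------------------------------------
  set nxt : Set ℕ → Set ℕ :=
    fun W => ((hd W : Finset ℕ) : Set ℕ) ∪ (tl W \ ((σ (tl W) : Finset ℕ) : Set ℕ))
    with hnxtdef
  have hnxtX : ∀ W, W ⊆ X → W.Infinite → nxt W ⊆ X := by
    intro W h1 h2 y hy
    rcases hy with hy | hy
    · exact h1 (hhdW W h1 h2 hy)
    · exact h1 ((tl_subset W) hy.1)
  have hnxtW : ∀ W, W ⊆ X → W.Infinite → nxt W ⊆ W := by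
    intro W h1 h2 y hy
    rcases hy with hy | hy
    · exact hhdW W h1 h2 hy
    · exact (tl_subset W) hy.1
  have hnxtinf : ∀ W, W ⊆ X → W.Infinite → (nxt W).Infinite := by
    intro W h1 h2
    refine Set.Infinite.mono Set.subset_union_right ?_
    exact (tl_infinite h2).diff (Finset.finite_toSet _)
  set C3 : Set ℕ → Bool × Bool := fun W =>
    ((if v (tl W) ≤ v (nxt W) then true else false),
     (if v (nxt W) ≤ v (tl W) then true else false)) with hC3def
  have hC3loc : ∀ W, W ⊆ X3 → W.Infinite → ∃ p : Finset ℕ, InitSegSet p W ∧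
      ∀ W', W' ⊆ X3 → W'.Infinite → InitSegSet p W' → C3 W' = C3 W := by
    intro W h1 h2
    have h1X : W ⊆ X := h1.trans hX3X
    have h1X1 : W ⊆ X1 := h1.trans hX3X1
    have htlX : tl W ⊆ X := (tl_subset W).trans h1X
    have htlinf := tl_infinite h2
    have hsW := hseg W h1X h2
    have hsT := hseg (tl W) htlX htlinf
    have hmW : sInf W ∈ W := Nat.sInf_mem h2.nonempty
    have hmσ : sInf W ∈ σ W := iseg_sInf_mem hsW (hne W h1X h2)
    have hSX : nxt W ⊆ X := hnxtX W h1X h2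
    have hSinf : (nxt W).Infinite := hnxtinf W h1X h2
    have hsS := hseg (nxt W) hSX hSinf
    have hhdS : hd W ⊆ σ (nxt W) ∧ hd W ≠ σ (nxt W) := by
      apply hhdprop W h1X1 h2
      · exact fun y hy => h1X1 ((tl_subset W) hy.1)
      · exact (tl_infinite h2).diff (Finset.finite_toSet _)
      · intro x hx y hy
        exact hsT.2 x (hhdtl W h1X1 h2 hx) y hy.1 (by
          intro hc
          exact hy.2 (by exact_mod_cast hc))
    set p := σ W ∪ σ (tl W) ∪ σ (nxt W) with hp
    have hpcase : ∀ y, y ∈ p ↔ y ∈ σ W ∨ y ∈ σ (tl W) ∨ y ∈ σ (nxt W) := by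
      intro y
      simp only [hp, Finset.mem_union, or_assoc]
    have hpW : (p : Set ℕ) ⊆ W := by
      intro y hy
      rcases (hpcase y).1 (by exact_mod_cast hy) with h | h | h
      · exact hsW.1 h
      · exact (tl_subset W) (hsT.1 h)
      · exact hnxtW W h1X h2 (hsS.1 h)
    have hpseg : InitSegSet p W := by
      refine ⟨hpW, ?_⟩
      intro x hx y hy hyp
      have hyσW : y ∉ σ W := fun h => hyp ((hpcase y).2 (Or.inl h))
      have hyσT : y ∉ σ (tl W) := fun h => hyp ((hpcase y).2 (Or.inr (Or.inl h)))
      have hyσS : y ∉ σ (nxt W) := fun h => hyp ((hpcase y).2 (Or.inr (Or.inr h)))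
      have hym : y ≠ sInf W := fun h => hyσW (by rw [h]; exact hmσ)
      have hytl : y ∈ tl W := ⟨hy, by simpa using hym⟩
      rcases (hpcase x).1 hx with hx' | hx' | hx'
      · exact hsW.2 x hx' y hy hyσW
      · exact hsT.2 x hx' y hytl hyσT
      · refine hsS.2 x hx' y (Or.inr ⟨hytl, ?_⟩) hyσS
        intro hc
        exact hyσT (by exact_mod_cast hc)
    refine ⟨p, hpseg, ?_⟩
    intro W' h1' h2' hpseg'
    have h1X' : W' ⊆ X := h1'.trans hX3X
    have hsWW' : InitSegSet (σ W) W' := by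
      constructor
      · intro x hx
        refine hpseg'.1 ?_
        have : (x : ℕ) ∈ p := (hpcase x).2 (Or.inl (by exact_mod_cast hx))
        exact_mod_cast this
      · intro x hx y hy hyσ
        by_cases hyP : y ∈ p
        · rcases (hpcase y).1 hyP with h | h | h
          · exact absurd h hyσ
          · exact hsW.2 x hx y ((tl_subset W) (hsT.1 h)) hyσ
          · exact hsW.2 x hx y (hnxtW W h1X h2 (hsS.1 h)) hyσ
        · exact hpseg'.2 x ((hpcase x).2 (Or.inl hx)) y hy hyP
    obtain ⟨hσeq, hveq⟩ := hloc W h1X h2 W' h1X' h2' hsWW'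
    have hminf' : sInf W' = sInf W := by
      apply sInf_eq
      · refine hpseg'.1 ?_
        have : (sInf W : ℕ) ∈ p := (hpcase _).2 (Or.inl hmσ)
        exact_mod_cast this
      · intro y hy
        by_cases hyP : y ∈ p
        · exact Nat.sInf_le (hpW (by exact_mod_cast hyP))
        · have := hpseg'.2 (sInf W) ((hpcase _).2 (Or.inl hmσ)) y hy hyP
          omega
    have hsTT' : InitSegSet (σ (tl W)) (tl W') := by
      constructor
      · intro x hx
        have hx' : (x : ℕ) ∈ σ (tl W) := by exact_mod_cast hx
        have hxW' : x ∈ W' := hpseg'.1 (by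
          have : (x : ℕ) ∈ p := (hpcase x).2 (Or.inr (Or.inl hx'))
          exact_mod_cast this)
        have hxtl : (x : ℕ) ∈ tl W := hsT.1 hx
        have hxm : x ≠ sInf W := by
          intro h
          have := sInf_lt_of_mem_tl hxtl
          omega
        rw [tl, hminf']
        exact ⟨hxW', by simpa using hxm⟩
      · intro x hx y hy hyσ
        have hyW' : y ∈ W' := (tl_subset W') hy
        have hym : y ≠ sInf W := by
          have := sInf_lt_of_mem_tl hy
          rw [hminf'] at this; omega
        by_cases hyP : y ∈ p
        · rcases (hpcase y).1 hyP with h | h | h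
          · have hyW : y ∈ W := hsW.1 h
            exact hsT.2 x hx y ⟨hyW, by simpa using hym⟩ hyσ
          · exact absurd h hyσ
          · -- y ∈ σ (nxt W) ⊆ hd ∪ (tl W \ σ (tl W))
            rcases hsS.1 h with hcase | hcase
            · exfalso
              exact hyσ (hhdtl W h1X1 h2 (by exact_mod_cast hcase))
            · exact hsT.2 x hx y hcase.1 (by
                intro hc; exact hcase.2 (by exact_mod_cast hc))
        · exact hpseg'.2 x ((hpcase x).2 (Or.inr (Or.inl hx))) y hyW' hyP
    obtain ⟨hσeq', hveq'⟩ := hloc (tl W) htlX htlinf (tl W')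
      ((tl_subset W').trans h1X') (tl_infinite h2') hsTT'
    have hhdeq : hd W' = hd W := by
      rw [hhddef]; simp only []
      rw [hσeq, hminf']
    have hSsub' : nxt W' ⊆ X := hnxtX W' h1X' h2'
    have hSinf' : (nxt W').Infinite := hnxtinf W' h1X' h2'
    have hsSS' : InitSegSet (σ (nxt W)) (nxt W') := by
      constructor
      · intro x hx
        have hx' : (x : ℕ) ∈ σ (nxt W) := by exact_mod_cast hx
        have hxp : (x : ℕ) ∈ p := (hpcase x).2 (Or.inr (Or.inr hx'))
        have hxW' : x ∈ W' := hpseg'.1 (by exact_mod_cast hxp)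
        rcases hsS.1 hx' with hcase | hcase
        · rw [hnxtdef]; simp only []
          rw [hhdeq]
          exact Or.inl hcase
        · have hxm : (x:ℕ) ≠ sInf W := by
            have := sInf_lt_of_mem_tl hcase.1
            omega
          rw [hnxtdef]; simp only []
          rw [hhdeq, hσeq']
          refine Or.inr ⟨?_, hcase.2⟩
          rw [tl, hminf']
          exact ⟨hxW', by simpa using hxm⟩
      · intro x hx y hy hyσ
        rcases hy with hy | hy
        · -- y ∈ hd W' = hd W ⊆ σ (nxt W) : excluded
          exfalso
          rw [hhdeq] at hy
          exact hyσ (hhdS.1 (by exact_mod_cast hy))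
        · -- y ∈ tl W' \ σ (tl W')
          rw [hσeq'] at hy
          have hyW' : y ∈ W' := (tl_subset W') hy.1
          have hym : y ≠ sInf W := by
            have := sInf_lt_of_mem_tl hy.1
            rw [hminf'] at this; omega
          by_cases hyP : y ∈ p
          · rcases (hpcase y).1 hyP with h | h | h
            · -- y ∈ σ W, y ≠ m so y ∈ hd W ⊆ σ (nxt W) : excluded
              exfalso
              apply hyσ
              apply hhdS.1
              exact Finset.mem_erase.2 ⟨by simpa using hym, h⟩
            · exfalso
              exact hy.2 (by exact_mod_cast h)
            · exact absurd h hyσ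
          · exact hpseg'.2 x ((hpcase x).2 (Or.inr (Or.inr hx))) y hyW' hyP
    obtain ⟨hσeqS, hveqS⟩ := hloc (nxt W) hSX hSinf (nxt W') hSsub' hSinf' hsSS'
    rw [hC3def]; simp only []
    rw [hveq', hveqS]
  obtain ⟨X4, d, hX4sub, hX4inf, hc3⟩ := stabilize (Set.univ : Set (Bool × Bool))
    (Set.finite_univ) X3 hX3inf C3 (fun _ _ _ => Set.mem_univ _) hC3loc
  have hX4X : X4 ⊆ X := hX4sub.trans hX3X
  have hX4X1 : X4 ⊆ X1 := hX4sub.trans hX3X1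
  have hX4X2 : X4 ⊆ X2 := hX4sub.trans hX3X2
  have hX4X3 : X4 ⊆ X3 := hX4sub
  ------------------------------------------------------------------
  -- Part 6 : comb sequence along X4 and the pairwise transfer
  ------------------------------------------------------------------
  have hiff : ∀ (c : Prop) (inst : Decidable c) (b : Bool),
      (if c then true else false) = b → (c ↔ b = true) := by
    intro c inst b hb
    constructor
    · intro hc; rw [if_pos hc] at hb; exact hb.symm
    · intro hbt; by_contra hc
      rw [if_neg hc] at hb; rw [hbt] at hb; exact Bool.false_ne_true hb
  set cstep : Finset ℕ → Set ℕ → Set ℕ :=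
    fun h T => T \ ((σ (((h : Finset ℕ) : Set ℕ) ∪ T) : Finset ℕ) : Set ℕ) with hcstepdef
  have hcstep_sub : ∀ (h : Finset ℕ) (T : Set ℕ), cstep h T ⊆ T :=
    fun h T => Set.diff_subset
  have hRmono : ∀ (h : Finset ℕ) (T : Set ℕ) (k l : ℕ), k ≤ l →
      (cstep h)^[l] T ⊆ (cstep h)^[k] T := by
    intro h T k l hkl
    induction l with
    | zero =>
      have hk : k = 0 := by omega
      subst hk; exact le_refl _
    | succ l ih =>
      rcases Nat.lt_or_ge k (l+1) with h' | h'
      · rw [Function.iterate_succ_apply']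
        exact (hcstep_sub _ _).trans (ih (by omega))
      · have hk : k = l + 1 := by omega
        subst hk; exact le_refl _
  have hRbasic : ∀ W, W ⊆ X1 → W.Infinite → ∀ T, T ⊆ X1 → T.Infinite →
      (∀ x ∈ hd W, ∀ y ∈ T, x < y) → ∀ n,
      (cstep (hd W))^[n] T ⊆ T ∧ ((cstep (hd W))^[n] T).Infinite := by
    intro W hW1 hW2 T hT1 hT2 hgt n
    induction n with
    | zero =>
      simp only [Function.iterate_zero_apply]
      exact ⟨le_refl _, hT2⟩
    | succ n ih =>
      rw [Function.iterate_succ_apply']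
      exact ⟨(hcstep_sub _ _).trans ih.1, ih.2.diff (Finset.finite_toSet _)⟩
  have hRgrow : ∀ W, W ⊆ X1 → W.Infinite → ∀ T, T ⊆ X1 → T.Infinite →
      (∀ x ∈ hd W, ∀ y ∈ T, x < y) → ∀ n,
      ∀ y ∈ (cstep (hd W))^[n+1] T,
      ∀ x ∈ σ (((hd W : Finset ℕ) : Set ℕ) ∪ (cstep (hd W))^[n] T), x < y := by
    intro W hW1 hW2 T hT1 hT2 hgt n y hy x hx
    have hRn := hRbasic W hW1 hW2 T hT1 hT2 hgt n
    have hGX : ((hd W : Finset ℕ) : Set ℕ) ∪ (cstep (hd W))^[n] T ⊆ X := by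
      intro z hz
      rcases hz with hz | hz
      · exact hX1X (hW1 (hhdW W (hW1.trans hX1X) hW2 hz))
      · exact hX1X (hT1 (hRn.1 hz))
    have hGinf : (((hd W : Finset ℕ) : Set ℕ) ∪ (cstep (hd W))^[n] T).Infinite :=
      hRn.2.mono Set.subset_union_right
    have hsG := hseg _ hGX hGinf
    rw [Function.iterate_succ_apply'] at hy
    exact hsG.2 x hx y (Or.inr hy.1) (fun hc => hy.2 (by exact_mod_cast hc))
  -- specialise to the base X4
  set s4 := σ X4 with hs4def
  set m4 := sInf X4 with hm4def
  set h4 := hd X4 with hh4def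
  set T4 := X4 \ ((s4 : Finset ℕ) : Set ℕ) with hT4def
  set R : ℕ → Set ℕ := fun n => (cstep h4)^[n] T4 with hRdef
  set u : ℕ → P := fun n => v (((h4 : Finset ℕ) : Set ℕ) ∪ R n) with hudef
  have hs4seg : InitSegSet s4 X4 := hseg X4 hX4X hX4inf
  have hm4σ : m4 ∈ s4 := iseg_sInf_mem hs4seg (hne X4 hX4X hX4inf)
  have hT4X1 : T4 ⊆ X1 := fun y hy => hX4X1 hy.1
  have hT4X4 : T4 ⊆ X4 := fun y hy => hy.1
  have hT4inf : T4.Infinite := hX4inf.diff (Finset.finite_toSet _)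
  have hT4gt : ∀ x ∈ s4, ∀ y ∈ T4, x < y := by
    intro x hx y hy
    exact hs4seg.2 x hx y hy.1 (fun hc => hy.2 (by exact_mod_cast hc))
  have hT4gthd : ∀ x ∈ h4, ∀ y ∈ T4, x < y := by
    intro x hx y hy
    exact hT4gt x (hhdsub X4 hx) y hy
  have hRn : ∀ n, R n ⊆ T4 ∧ (R n).Infinite :=
    fun n => hRbasic X4 hX4X1 hX4inf T4 hT4X1 hT4inf hT4gthd n
  have hRX4 : ∀ n, R n ⊆ X4 := fun n => ((hRn n).1).trans hT4X4
  have hRinf : ∀ n, (R n).Infinite := fun n => (hRn n).2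
  have hh4X4 : ((h4 : Finset ℕ) : Set ℕ) ⊆ X4 := hhdW X4 hX4X hX4inf
  have hGn : ∀ n, ((h4 : Finset ℕ) : Set ℕ) ∪ R n ⊆ X4 := by
    intro n y hy
    rcases hy with hy | hy
    · exact hh4X4 hy
    · exact hRX4 n hy
  have hGninf : ∀ n, (((h4 : Finset ℕ) : Set ℕ) ∪ R n).Infinite :=
    fun n => (hRinf n).mono Set.subset_union_right
  have hEn : ∀ n, h4 ⊆ σ (((h4 : Finset ℕ) : Set ℕ) ∪ R n) ∧
      h4 ≠ σ (((h4 : Finset ℕ) : Set ℕ) ∪ R n) := by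
    intro n
    exact hhdprop X4 hX4X1 hX4inf (R n) (((hRn n).1).trans hT4X1) (hRinf n)
      (fun x hx y hy => hT4gthd x hx y ((hRn n).1 hy))
  have hEnsub : ∀ n, ((σ (((h4 : Finset ℕ) : Set ℕ) ∪ R n) : Finset ℕ) : Set ℕ) ⊆
      ((h4 : Finset ℕ) : Set ℕ) ∪ R n :=
    fun n => (hseg _ ((hGn n).trans hX4X) (hGninf n)).1
  have hRgrow4 : ∀ n, ∀ y ∈ R (n+1),
      ∀ x ∈ σ (((h4 : Finset ℕ) : Set ℕ) ∪ R n), x < y :=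
    fun n => hRgrow X4 hX4X1 hX4inf T4 hT4X1 hT4inf hT4gthd n
  have hRdisj : ∀ n, ∀ y ∈ R (n+1), y ∉ σ (((h4 : Finset ℕ) : Set ℕ) ∪ R n) := by
    intro n y hy hc
    exact lt_irrefl y (hRgrow4 n y hy y hc)
  -- pairwise transfer
  have hUpair : ∀ k l, k < l →
      ((u k ≤ u l) ↔ d.1 = true) ∧ ((u l ≤ u k) ↔ d.2 = true) := by
    intro k l hkl
    set Ek := σ (((h4 : Finset ℕ) : Set ℕ) ∪ R k) with hEkdef
    set V := ((s4 : Finset ℕ) : Set ℕ) ∪ (((Ek \ h4 : Finset ℕ) : Set ℕ) ∪ R l) with hVdef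
    have hEkmh : ((Ek \ h4 : Finset ℕ) : Set ℕ) ⊆ R k := by
      intro y hy
      have hy' : (y : ℕ) ∈ Ek \ h4 := by exact_mod_cast hy
      have h1 := Finset.mem_sdiff.1 hy'
      rcases hEnsub k (by exact_mod_cast h1.1) with h | h
      · exact absurd (by exact_mod_cast h) h1.2
      · exact h
    have hVX4 : V ⊆ X4 := by
      intro y hy
      rcases hy with hy | hy
      · exact hs4seg.1 hy
      · rcases hy with hy | hy
        · exact hRX4 k (hEkmh hy)
        · exact hRX4 l hy
    have hVinf : V.Infinite :=
      (hRinf l).mono ((Set.subset_union_right).trans Set.subset_union_right)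
    have hsegV : InitSegSet s4 V := by
      constructor
      · exact fun x hx => Or.inl hx
      · intro x hx y hy hyσ
        rcases hy with hy | hy
        · exact absurd (by exact_mod_cast hy) hyσ
        · rcases hy with hy | hy
          · exact hT4gt x hx y ((hRn k).1 (hEkmh hy))
          · exact hT4gt x hx y ((hRn l).1 hy)
    obtain ⟨hσV, hvV⟩ := hloc X4 hX4X hX4inf V (hVX4.trans hX4X) hVinf hsegV
    have hm4me : ∀ y ∈ T4, m4 < y := by
      intro y hy
      exact hT4gt m4 hm4σ y hy
    have hsInfV : sInf V = m4 := by
      apply sInf_eq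
      · exact Or.inl (by exact_mod_cast hm4σ)
      · intro y hy
        exact Nat.sInf_le (hVX4 hy)
    have htlV : tl V = ((Ek : Finset ℕ) : Set ℕ) ∪ R l := by
      rw [tl, hsInfV]
      ext y
      simp only [Set.mem_diff, Set.mem_singleton_iff]
      constructor
      · rintro ⟨hy, hym⟩
        rcases hy with hy | hy
        · left
          have hy' : (y : ℕ) ∈ s4 := by exact_mod_cast hy
          have : y ∈ h4 := Finset.mem_erase.2 ⟨hym, hy'⟩
          exact_mod_cast (hEn k).1 this
        · rcases hy with hy | hy
          · left
            have hy' : (y : ℕ) ∈ Ek \ h4 := by exact_mod_cast hy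
            exact_mod_cast (Finset.mem_sdiff.1 hy').1
          · right; exact hy
      · intro hy
        rcases hy with hy | hy
        · have hy' : (y : ℕ) ∈ Ek := by exact_mod_cast hy
          by_cases hyh : y ∈ h4
          · constructor
            · exact Or.inl (by exact_mod_cast hhdsub X4 hyh)
            · have := hhdgt X4 hX4X hX4inf y hyh
              omega
          · have hysd : (y : ℕ) ∈ Ek \ h4 := Finset.mem_sdiff.2 ⟨hy', hyh⟩
            constructor
            · exact Or.inr (Or.inl (by exact_mod_cast hysd))
            · have hyR : y ∈ R k := hEkmh (by exact_mod_cast hysd)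
              have := hm4me y ((hRn k).1 hyR)
              omega
        · constructor
          · exact Or.inr (Or.inr hy)
          · have := hm4me y ((hRn l).1 hy)
            omega
    have hsegEk : InitSegSet Ek (tl V) := by
      rw [htlV]
      constructor
      · exact fun x hx => Or.inl hx
      · intro x hx y hy hyσ
        rcases hy with hy | hy
        · exact absurd (by exact_mod_cast hy) hyσ
        · have hyR : y ∈ R (k+1) := hRmono h4 T4 (k+1) l hkl hy
          exact hRgrow4 k y hyR x hx
    have htlVX : tl V ⊆ X := (tl_subset V).trans ((hVX4).trans hX4X)
    obtain ⟨hσtlV, hvtlV⟩ := hloc (((h4 : Finset ℕ) : Set ℕ) ∪ R k)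
      ((hGn k).trans hX4X) (hGninf k) (tl V) htlVX (tl_infinite hVinf) hsegEk
    have hhdV : hd V = h4 := by
      rw [hhddef]; simp only []
      rw [hσV, hsInfV]
    have hnxtV : nxt V = ((h4 : Finset ℕ) : Set ℕ) ∪ R l := by
      rw [hnxtdef]; simp only []
      rw [hhdV, hσtlV, htlV]
      have hdisj : ∀ y ∈ R l, (y : ℕ) ∉ Ek := by
        intro y hy hc
        have hyR : y ∈ R (k+1) := hRmono h4 T4 (k+1) l hkl hy
        exact lt_irrefl y (hRgrow4 k y hyR y hc)
      ext y
      simp only [Set.mem_union, Set.mem_diff, Finset.mem_coe]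
      constructor
      · rintro (hy | ⟨hy | hy, hyE⟩)
        · exact Or.inl hy
        · exact absurd hy hyE
        · exact Or.inr hy
      · rintro (hy | hy)
        · exact Or.inl hy
        · exact Or.inr ⟨Or.inr hy, fun hc => hdisj y hy hc⟩
    have hC3V := hc3 V hVX4 hVinf
    rw [hC3def] at hC3V; simp only [] at hC3V
    have hfst := congrArg Prod.fst hC3V
    have hsnd := congrArg Prod.snd hC3V
    simp only [] at hfst hsnd
    rw [hvtlV, congrArg v hnxtV] at hfst hsnd
    rw [hudef]; simp only []
    exact ⟨hiff _ _ _ hfst, hiff _ _ _ hsnd⟩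
  ------------------------------------------------------------------
  -- Part 7 : case analysis
  ------------------------------------------------------------------
  have hm4lt : ∀ y ∈ T4, m4 < y := fun y hy => hT4gt m4 hm4σ y hy
  obtain ⟨d1, d2⟩ := d
  by_cases hd1 : d1 = true
  swap
  · -- d1 = false
    exfalso
    have hd1f : d1 = false := by revert hd1; cases d1 <;> simp
    by_cases hd2 : d2 = true
    · -- GT : descending chain
      refine hwqo.1 ⟨u, ?_⟩
      intro n
      have hp := hUpair n (n+1) (by omega)
      constructor
      · exact hp.2.2 hd2
      · intro hle
        have hcon := hp.1.1 hle
        rw [hd1f] at hcon; exact Bool.false_ne_true hcon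
    · -- INC : antichain
      have hd2f : d2 = false := by revert hd2; cases d2 <;> simp
      refine hwqo.2 ⟨u, ?_⟩
      intro m n hmn hle
      rcases Nat.lt_or_ge m n with h | h
      · have hcon := (hUpair m n h).1.1 hle
        rw [hd1f] at hcon; exact Bool.false_ne_true hcon
      · have h' : n < m := by omega
        have hcon := (hUpair n m h').2.1 hle
        rw [hd2f] at hcon; exact Bool.false_ne_true hcon
  by_cases hd2 : d2 = true
  swap
  · -- LT : ideal pigeonhole, contradiction with badness
    exfalso
    have hd2f : d2 = false := by revert hd2; cases d2 <;> simp
    have humono : ∀ n : ℕ, u n ≤ u (n+1) ∧ u n ≠ u (n+1) := by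
      intro n
      have hp := hUpair n (n+1) (by omega)
      refine ⟨hp.1.2 hd1, ?_⟩
      intro heq
      have hle : u (n+1) ≤ u n := by rw [heq]
      have hcon := hp.2.1 hle
      rw [hd2f] at hcon; exact Bool.false_ne_true hcon
    have hDh : {p : P | ∃ n, p ≤ u n} ∈ chainIdeals P := downset_chain_mem u humono
    have hu0m : u 0 ∈ {p : P | ∃ n, p ≤ u n} := ⟨0, le_refl _⟩
    have hG0X2 : ((h4 : Finset ℕ) : Set ℕ) ∪ R 0 ⊆ X2 := (hGn 0).trans hX4X2
    have hp1 : pat (u 0) = A0 := by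
      rw [hudef]; simp only []
      exact hpat _ hG0X2 (hGninf 0)
    have hDhA0 : {p : P | ∃ n, p ≤ u n} ∈ A0 := by
      rw [← hp1, hpatdef]; exact ⟨hDh, hu0m⟩
    have hp2 : pat (v X4) = A0 := hpat X4 hX4X2 hX4inf
    have hvX4mem : v X4 ∈ {p : P | ∃ n, p ≤ u n} := by
      have hmem : {p : P | ∃ n, p ≤ u n} ∈ pat (v X4) := by rw [hp2]; exact hDhA0
      rw [hpatdef] at hmem
      exact hmem.2
    obtain ⟨n, hn⟩ := hvX4mem
    set Wst := ((s4 : Finset ℕ) : Set ℕ) ∪ R n with hWstdef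
    have hWstX4 : Wst ⊆ X4 := by
      intro y hy
      rcases hy with hy | hy
      · exact hs4seg.1 hy
      · exact hRX4 n hy
    have hWstinf : Wst.Infinite := (hRinf n).mono Set.subset_union_right
    have hsegWst : InitSegSet s4 Wst := by
      constructor
      · exact fun x hx => Or.inl hx
      · intro x hx y hy hyσ
        rcases hy with hy | hy
        · exact absurd (by exact_mod_cast hy) hyσ
        · exact hT4gt x hx y ((hRn n).1 hy)
    obtain ⟨hσWst, hvWst⟩ := hloc X4 hX4X hX4inf Wst (hWstX4.trans hX4X) hWstinf hsegWst
    have hsInfWst : sInf Wst = m4 := sInf_eq (Or.inl (by exact_mod_cast hm4σ))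
      (fun y hy => Nat.sInf_le (hWstX4 hy))
    have htlWst : tl Wst = ((h4 : Finset ℕ) : Set ℕ) ∪ R n := by
      rw [tl, hsInfWst]
      ext y
      simp only [Set.mem_diff, Set.mem_singleton_iff, Set.mem_union, Finset.mem_coe]
      constructor
      · rintro ⟨hy | hy, hym⟩
        · left
          exact Finset.mem_erase.2 ⟨hym, by exact_mod_cast hy⟩
        · right; exact hy
      · rintro (hy | hy)
        · constructor
          · left
            exact_mod_cast hhdsub X4 hy
          · have := hhdgt X4 hX4X hX4inf y hy
            omega
        · constructor
          · right; exact hy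
          · have := hm4lt y ((hRn n).1 hy)
            omega
    apply hbad Wst (hWstX4.trans hX4X) hWstinf
    rw [hvWst, congrArg v htlWst]
    rw [hudef] at hn; simp only [] at hn
    exact hn
  ------------------------------------------------------------------
  -- Part 8 : the equal case, tail-independence and the derived level
  ------------------------------------------------------------------
  have hEQ : ∀ W, W ⊆ X4 → W.Infinite → v (tl W) = v (nxt W) := by
    intro W h1 h2
    have hcc := hc3 W h1 h2
    rw [hC3def] at hcc; simp only [] at hcc
    have hfst := congrArg Prod.fst hcc
    have hsnd := congrArg Prod.snd hcc
    simp only [] at hfst hsnd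
    exact le_antisymm ((hiff _ _ _ hfst).2 hd1) ((hiff _ _ _ hsnd).2 hd2)
  have hTIi : ∀ W, W ⊆ X4 → W.Infinite → ∀ T, T ⊆ X4 → T.Infinite →
      (∀ x ∈ hd W, ∀ y ∈ T, x < y) →
      v (((hd W : Finset ℕ) : Set ℕ) ∪ T) =
        v (((hd W : Finset ℕ) : Set ℕ) ∪ cstep (hd W) T) := by
    intro W h1 h2 T hT1 hT2 hgt
    have h1X : W ⊆ X := h1.trans hX4X
    have h1X1 : W ⊆ X1 := h1.trans hX4X1
    obtain ⟨b, hbσ, hbne⟩ := hhdne W h1X1 h2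
    have hbhd : b ∈ hd W := Finset.mem_erase.2 ⟨hbne, hbσ⟩
    have hmb : sInf W < b := hhdgt W h1X h2 b hbhd
    set V := ((σ W : Finset ℕ) : Set ℕ) ∪ T with hVdef2
    have hVX4 : V ⊆ X4 := by
      intro y hy
      rcases hy with hy | hy
      · exact h1 ((hseg W h1X h2).1 hy)
      · exact hT1 hy
    have hVinf : V.Infinite := hT2.mono Set.subset_union_right
    have hsegV : InitSegSet (σ W) V := by
      constructor
      · exact fun x hx => Or.inl hx
      · intro x hx y hy hyσ
        rcases hy with hy | hy
        · exact absurd (by exact_mod_cast hy) hyσ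
        · by_cases hxm : x = sInf W
          · subst hxm
            exact lt_trans hmb (hgt b hbhd y hy)
          · exact hgt x (Finset.mem_erase.2 ⟨hxm, hx⟩) y hy
    obtain ⟨hσV, hvV⟩ := hloc W h1X h2 V (hVX4.trans hX4X) hVinf hsegV
    have hsInfV : sInf V = sInf W := by
      apply sInf_eq
      · exact Or.inl (by exact_mod_cast iseg_sInf_mem (hseg W h1X h2) (hne W h1X h2))
      · intro y hy
        rcases hy with hy | hy
        · exact Nat.sInf_le ((hseg W h1X h2).1 hy)
        · have : sInf W < y := lt_trans hmb (hgt b hbhd y hy)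
          omega
    have hmT : sInf W ∉ T := by
      intro h
      have := hgt b hbhd _ h
      omega
    have htlV : tl V = ((hd W : Finset ℕ) : Set ℕ) ∪ T := by
      rw [tl, hsInfV]
      ext y
      simp only [Set.mem_diff, Set.mem_singleton_iff, Set.mem_union, Finset.mem_coe]
      constructor
      · rintro ⟨hy | hy, hym⟩
        · left; exact Finset.mem_erase.2 ⟨hym, by exact_mod_cast hy⟩
        · right; exact hy
      · rintro (hy | hy)
        · refine ⟨Or.inl (by exact_mod_cast hhdsub W hy), ?_⟩
          have := hhdgt W h1X h2 y hy
          omega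
        · refine ⟨Or.inr hy, ?_⟩
          intro hc; rw [hc] at hy; exact hmT hy
    have hhdV : hd V = hd W := by
      rw [hhddef]; simp only []
      rw [hσV, hsInfV]
    have hEQV := hEQ V hVX4 hVinf
    rw [hnxtdef] at hEQV; simp only [] at hEQV
    rw [hhdV, htlV] at hEQV
    have hsub := (hhdprop W h1X1 h2 T (hT1.trans hX4X1) hT2 hgt).1
    have hsetEq : ((((hd W : Finset ℕ) : Set ℕ) ∪ T) \
        ((σ (((hd W : Finset ℕ) : Set ℕ) ∪ T) : Finset ℕ) : Set ℕ)) = cstep (hd W) T := by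
      rw [hcstepdef]; simp only []
      ext y
      simp only [Set.mem_diff, Set.mem_union, Finset.mem_coe]
      constructor
      · rintro ⟨hy | hy, hyσ⟩
        · exact absurd (hsub hy) hyσ
        · exact ⟨hy, hyσ⟩
      · rintro ⟨hy, hyσ⟩
        exact ⟨Or.inr hy, hyσ⟩
    rw [hsetEq] at hEQV
    exact hEQV
  have hTIiter : ∀ W, W ⊆ X4 → W.Infinite → ∀ T, T ⊆ X4 → T.Infinite →
      (∀ x ∈ hd W, ∀ y ∈ T, x < y) → ∀ n,
      v (((hd W : Finset ℕ) : Set ℕ) ∪ T) =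
        v (((hd W : Finset ℕ) : Set ℕ) ∪ (cstep (hd W))^[n] T) := by
    intro W h1 h2 T hT1 hT2 hgt n
    induction n with
    | zero => simp only [Function.iterate_zero_apply]
    | succ n ih =>
      rw [Function.iterate_succ_apply']
      rw [ih]
      have hRb := hRbasic W (h1.trans hX4X1) h2 T (hT1.trans hX4X1) hT2 hgt n
      exact hTIi W h1 h2 _ ((hRb.1).trans hT1) hRb.2
        (fun x hx y hy => hgt x hx y (hRb.1 hy))
  have hming : ∀ W, W ⊆ X4 → W.Infinite → ∀ T, T ⊆ X4 → T.Infinite →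
      (∀ x ∈ hd W, ∀ y ∈ T, x < y) → ∀ N, ∃ n, ∀ y ∈ (cstep (hd W))^[n] T, N < y := by
    intro W h1 h2 T hT1 hT2 hgt
    have hstep : ∀ n, sInf ((cstep (hd W))^[n] T) < sInf ((cstep (hd W))^[n+1] T) := by
      intro n
      have hRb := hRbasic W (h1.trans hX4X1) h2 T (hT1.trans hX4X1) hT2 hgt n
      have hRb1 := hRbasic W (h1.trans hX4X1) h2 T (hT1.trans hX4X1) hT2 hgt (n+1)
      have hgtn : ∀ x ∈ hd W, ∀ y ∈ (cstep (hd W))^[n] T, x < y :=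
        fun x hx y hy => hgt x hx y (hRb.1 hy)
      have hGX : ((hd W : Finset ℕ) : Set ℕ) ∪ (cstep (hd W))^[n] T ⊆ X := by
        intro z hz
        rcases hz with hz | hz
        · exact (h1.trans hX4X) (hhdW W (h1.trans hX4X) h2 hz)
        · exact hX4X (hT1 (hRb.1 hz))
      have hGinf : (((hd W : Finset ℕ) : Set ℕ) ∪ (cstep (hd W))^[n] T).Infinite :=
        hRb.2.mono Set.subset_union_right
      have hsG := hseg _ hGX hGinf
      have hsInfσ : sInf ((cstep (hd W))^[n] T) ∈
          σ (((hd W : Finset ℕ) : Set ℕ) ∪ (cstep (hd W))^[n] T) := by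
        by_contra hnot
        have hprop := hhdprop W (h1.trans hX4X1) h2 ((cstep (hd W))^[n] T)
          ((hRb.1).trans (hT1.trans hX4X1)) hRb.2 hgtn
        have hss : hd W ⊂ σ (((hd W : Finset ℕ) : Set ℕ) ∪ (cstep (hd W))^[n] T) :=
          hprop.1.ssubset_of_ne hprop.2
        obtain ⟨e, heσ, hehd⟩ := Finset.exists_of_ssubset hss
        have heR : (e : ℕ) ∈ (cstep (hd W))^[n] T := by
          rcases hsG.1 heσ with h | h
          · exact absurd (by exact_mod_cast h) hehd
          · exact h
        have h1' : sInf ((cstep (hd W))^[n] T) ≤ e := Nat.sInf_le heR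
        have h2' : e < sInf ((cstep (hd W))^[n] T) :=
          hsG.2 e heσ _ (Or.inr (Nat.sInf_mem hRb.2.nonempty)) hnot
        omega
      have hmem1 : sInf ((cstep (hd W))^[n+1] T) ∈ (cstep (hd W))^[n+1] T :=
        Nat.sInf_mem hRb1.2.nonempty
      exact hRgrow W (h1.trans hX4X1) h2 T (hT1.trans hX4X1) hT2 hgt n _ hmem1 _ hsInfσ
    intro N
    have hge : ∀ n, n ≤ sInf ((cstep (hd W))^[n] T) := by
      intro n
      induction n with
      | zero => omega
      | succ n ih =>
        have := hstep n
        omega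
    refine ⟨N+1, ?_⟩
    intro y hy
    have h1' := hge (N+1)
    have h2' : sInf ((cstep (hd W))^[N+1] T) ≤ y := Nat.sInf_le hy
    omega
  have hTI : ∀ W, W ⊆ X4 → W.Infinite → ∀ T, T ⊆ X4 → T.Infinite →
      (∀ x ∈ hd W, ∀ y ∈ T, x < y) → ∀ T', T' ⊆ X4 → T'.Infinite →
      (∀ x ∈ hd W, ∀ y ∈ T', x < y) →
      v (((hd W : Finset ℕ) : Set ℕ) ∪ T) = v (((hd W : Finset ℕ) : Set ℕ) ∪ T') := by
    intro W h1 h2 T hT1 hT2 hgt T' hT1' hT2' hgt'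
    set G' := ((hd W : Finset ℕ) : Set ℕ) ∪ T' with hG'def
    have hG'X4 : G' ⊆ X4 := by
      intro y hy
      rcases hy with hy | hy
      · exact h1 (hhdW W (h1.trans hX4X) h2 hy)
      · exact hT1' hy
    have hG'inf : G'.Infinite := hT2'.mono Set.subset_union_right
    set E' := σ G' with hE'def
    have hsG' := hseg G' (hG'X4.trans hX4X) hG'inf
    have hdsubE' := hhdprop W (h1.trans hX4X1) h2 T' (hT1'.trans hX4X1) hT2' hgt'
    obtain ⟨n, hn⟩ := hming W h1 h2 T hT1 hT2 hgt (E'.sup id)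
    set Tstar := (cstep (hd W))^[n] T with hTstardef
    have hRb := hRbasic W (h1.trans hX4X1) h2 T (hT1.trans hX4X1) hT2 hgt n
    have hTstarX4 : Tstar ⊆ X4 := (hRb.1).trans hT1
    have hgtE' : ∀ x ∈ E', ∀ y ∈ Tstar, x < y := by
      intro x hx y hy
      have h1' := Finset.le_sup (f := id) hx
      have h2' := hn y hy
      simp only [id] at h1'
      omega
    have hsegE' : InitSegSet E' (((E' : Finset ℕ) : Set ℕ) ∪ Tstar) := by
      constructor
      · exact fun x hx => Or.inl hx
      · intro x hx y hy hyσ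
        rcases hy with hy | hy
        · exact absurd (by exact_mod_cast hy) hyσ
        · exact hgtE' x hx y hy
    have hunX : ((E' : Finset ℕ) : Set ℕ) ∪ Tstar ⊆ X := by
      intro y hy
      rcases hy with hy | hy
      · exact (hG'X4.trans hX4X) (hsG'.1 hy)
      · exact hX4X (hTstarX4 hy)
    have huninf : (((E' : Finset ℕ) : Set ℕ) ∪ Tstar).Infinite :=
      hRb.2.mono Set.subset_union_right
    obtain ⟨hσun, hvun⟩ := hloc G' (hG'X4.trans hX4X) hG'inf _ hunX huninf hsegE'
    have hsetsplit : ((E' : Finset ℕ) : Set ℕ) ∪ Tstar =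
        ((hd W : Finset ℕ) : Set ℕ) ∪ (((E' \ hd W : Finset ℕ) : Set ℕ) ∪ Tstar) := by
      ext y
      simp only [Set.mem_union, Finset.mem_coe, Finset.coe_sdiff, Set.mem_diff]
      constructor
      · rintro (hy | hy)
        · by_cases hyh : y ∈ hd W
          · exact Or.inl hyh
          · exact Or.inr (Or.inl ⟨hy, hyh⟩)
        · exact Or.inr (Or.inr hy)
      · rintro (hy | hy | hy)
        · exact Or.inl (hdsubE'.1 hy)
        · exact Or.inl hy.1
        · exact Or.inr hy
    set T'' := ((E' \ hd W : Finset ℕ) : Set ℕ) ∪ Tstar with hT''def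
    have hT''X4 : T'' ⊆ X4 := by
      intro y hy
      rcases hy with hy | hy
      · have hy' : (y : ℕ) ∈ E' ∧ (y : ℕ) ∉ hd W := by
          have := Finset.mem_sdiff.1 (by exact_mod_cast hy)
          exact this
        rcases hsG'.1 (by exact_mod_cast hy'.1) with h | h
        · exact absurd (by exact_mod_cast h) hy'.2
        · exact hT1' h
      · exact hTstarX4 hy
    have hT''inf : T''.Infinite := hRb.2.mono Set.subset_union_right
    have hT''gt : ∀ x ∈ hd W, ∀ y ∈ T'', x < y := by
      intro x hx y hy
      rcases hy with hy | hy
      · have hy' : (y : ℕ) ∈ E' ∧ (y : ℕ) ∉ hd W := by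
          have := Finset.mem_sdiff.1 (by exact_mod_cast hy)
          exact this
        rcases hsG'.1 (by exact_mod_cast hy'.1) with h | h
        · exact absurd (by exact_mod_cast h) hy'.2
        · exact hgt' x hx y h
      · exact hgt x hx y (hRb.1 hy)
    have hstep1 := hTIi W h1 h2 T'' hT''X4 hT''inf hT''gt
    have hid : ((hd W : Finset ℕ) : Set ℕ) ∪ T'' = ((E' : Finset ℕ) : Set ℕ) ∪ Tstar :=
      hsetsplit.symm
    have hσT'' : σ (((hd W : Finset ℕ) : Set ℕ) ∪ T'') = E' := by
      rw [hid]; exact hσun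
    have hcstepT'' : cstep (hd W) T'' = Tstar := by
      rw [hcstepdef]; simp only []
      rw [hσT'']
      ext y
      simp only [hT''def, Set.mem_diff, Set.mem_union, Finset.mem_coe, Finset.coe_sdiff,
        Set.mem_diff]
      constructor
      · rintro ⟨hy | hy, hyE⟩
        · exact absurd hy.1 hyE
        · exact hy
      · intro hy
        refine ⟨Or.inr hy, ?_⟩
        intro hc
        exact lt_irrefl y (hgtE' y hc y hy)
    rw [hcstepT''] at hstep1
    calc v (((hd W : Finset ℕ) : Set ℕ) ∪ T)
        = v (((hd W : Finset ℕ) : Set ℕ) ∪ Tstar) := hTIiter W h1 h2 T hT1 hT2 hgt n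
      _ = v (((hd W : Finset ℕ) : Set ℕ) ∪ T'') := hstep1.symm
      _ = v (((E' : Finset ℕ) : Set ℕ) ∪ Tstar) := congrArg v hid
      _ = v G' := hvun
  ------------------------------------------------------------------
  -- the derived level
  ------------------------------------------------------------------
  have haX4 : m4 ∈ X4 := Nat.sInf_mem hX4inf.nonempty
  have hX'X4 : tl X4 ⊆ X4 := tl_subset X4
  have hX'gt : ∀ y ∈ tl X4, m4 < y := fun y hy => sInf_lt_of_mem_tl hy
  have hins : ∀ W, W ⊆ tl X4 → W.Infinite →
      insert m4 W ⊆ X4 ∧ (insert m4 W).Infinite ∧ sInf (insert m4 W) = m4 := by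
    intro W h1 h2
    refine ⟨?_, h2.mono (Set.subset_insert _ _), ?_⟩
    · intro y hy
      rcases Set.mem_insert_iff.1 hy with rfl | hy
      · exact haX4
      · exact hX'X4 (h1 hy)
    · apply sInf_eq (Set.mem_insert _ _)
      intro y hy
      rcases Set.mem_insert_iff.1 hy with rfl | hy
      · exact le_refl _
      · exact le_of_lt (hX'gt y (h1 hy))
  have hσ'hd : ∀ W, W ⊆ tl X4 → W.Infinite →
      (σ (insert m4 W)).erase m4 = hd (insert m4 W) := by
    intro W h1 h2
    rw [hhddef]; simp only []
    rw [(hins W h1 h2).2.2]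
  have hne' : ∀ W, W ⊆ tl X4 → W.Infinite → ((σ (insert m4 W)).erase m4).Nonempty := by
    intro W h1 h2
    obtain ⟨hi1, hi2, hi3⟩ := hins W h1 h2
    obtain ⟨b, hbσ, hbne⟩ := hhdne (insert m4 W) (hi1.trans hX4X1) hi2
    rw [hi3] at hbne
    exact ⟨b, Finset.mem_erase.2 ⟨hbne, hbσ⟩⟩
  have hseg' : ∀ W, W ⊆ tl X4 → W.Infinite →
      InitSegSet ((σ (insert m4 W)).erase m4) W := by
    intro W h1 h2
    obtain ⟨hi1, hi2, hi3⟩ := hins W h1 h2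
    have hsi := hseg (insert m4 W) (hi1.trans hX4X) hi2
    constructor
    · intro x hx
      have hx' := Finset.mem_erase.1 (by exact_mod_cast hx : (x : ℕ) ∈ (σ (insert m4 W)).erase m4)
      rcases Set.mem_insert_iff.1 (hsi.1 (by exact_mod_cast hx'.2)) with h | h
      · exact absurd h hx'.1
      · exact h
    · intro x hx y hy hyσ'
      have hx' := Finset.mem_erase.1 hx
      have hym : y ≠ m4 := by
        intro hc
        rw [hc] at hy
        exact lt_irrefl m4 (hX'gt m4 (h1 hy))
      have hyσ : y ∉ σ (insert m4 W) := fun hc => hyσ' (Finset.mem_erase.2 ⟨hym, hc⟩)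
      exact hsi.2 x hx'.2 y (Set.mem_insert_of_mem _ hy) hyσ
  have hloc' : ∀ W, W ⊆ tl X4 → W.Infinite → ∀ W', W' ⊆ tl X4 → W'.Infinite →
      InitSegSet ((σ (insert m4 W)).erase m4) W' →
      (σ (insert m4 W')).erase m4 = (σ (insert m4 W)).erase m4 ∧ v W' = v W := by
    intro W h1 h2 W' h1' h2' hsegp
    obtain ⟨hi1, hi2, hi3⟩ := hins W h1 h2
    obtain ⟨hi1', hi2', hi3'⟩ := hins W' h1' h2'
    have hsi := hseg (insert m4 W) (hi1.trans hX4X) hi2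
    have hm4mem : m4 ∈ σ (insert m4 W) := by
      have := iseg_sInf_mem hsi (hne _ (hi1.trans hX4X) hi2)
      rwa [hi3] at this
    have hsegi : InitSegSet (σ (insert m4 W)) (insert m4 W') := by
      constructor
      · intro x hx
        have hx' : (x : ℕ) ∈ σ (insert m4 W) := by exact_mod_cast hx
        by_cases hxm : (x : ℕ) = m4
        · rw [hxm]; exact Set.mem_insert _ _
        · exact Set.mem_insert_of_mem _
            (hsegp.1 (by exact_mod_cast Finset.mem_erase.2 ⟨hxm, hx'⟩))
      · intro x hx y hy hyσ
        rcases Set.mem_insert_iff.1 hy with rfl | hy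
        · exact absurd hm4mem hyσ
        · by_cases hxm : x = m4
          · rw [hxm]; exact hX'gt y (h1' hy)
          · have hxhd : x ∈ (σ (insert m4 W)).erase m4 := Finset.mem_erase.2 ⟨hxm, hx⟩
            have hym : y ≠ m4 := by
              intro hc
              rw [hc] at hy
              exact lt_irrefl m4 (hX'gt m4 (h1' hy))
            have hyσ' : y ∉ (σ (insert m4 W)).erase m4 :=
              fun hc => hyσ (Finset.mem_of_mem_erase hc)
            exact hsegp.2 x hxhd y hy hyσ'
    obtain ⟨hσeq, _⟩ := hloc (insert m4 W) (hi1.trans hX4X) hi2 (insert m4 W')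
      (hi1'.trans hX4X) hi2' hsegi
    constructor
    · rw [hσeq]
    · -- tail independence
      have hsegW := hseg' W h1 h2
      have hWsplit : ((((σ (insert m4 W)).erase m4 : Finset ℕ) : Set ℕ) ∪
          (W \ (((σ (insert m4 W)).erase m4 : Finset ℕ) : Set ℕ))) = W :=
        Set.union_diff_cancel hsegW.1
      have hW'split : ((((σ (insert m4 W)).erase m4 : Finset ℕ) : Set ℕ) ∪
          (W' \ (((σ (insert m4 W)).erase m4 : Finset ℕ) : Set ℕ))) = W' :=
        Set.union_diff_cancel hsegp.1
      have hTX4 : W \ (((σ (insert m4 W)).erase m4 : Finset ℕ) : Set ℕ) ⊆ X4 :=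
        fun y hy => hX'X4 (h1 hy.1)
      have hTinf : (W \ (((σ (insert m4 W)).erase m4 : Finset ℕ) : Set ℕ)).Infinite :=
        h2.diff (Finset.finite_toSet _)
      have hTgt : ∀ x ∈ (σ (insert m4 W)).erase m4,
          ∀ y ∈ W \ (((σ (insert m4 W)).erase m4 : Finset ℕ) : Set ℕ), x < y := by
        intro x hx y hy
        exact hsegW.2 x hx y hy.1 (fun hc => hy.2 (by exact_mod_cast hc))
      have hT'X4 : W' \ (((σ (insert m4 W)).erase m4 : Finset ℕ) : Set ℕ) ⊆ X4 :=
        fun y hy => hX'X4 (h1' hy.1)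
      have hT'inf : (W' \ (((σ (insert m4 W)).erase m4 : Finset ℕ) : Set ℕ)).Infinite :=
        h2'.diff (Finset.finite_toSet _)
      have hT'gt : ∀ x ∈ (σ (insert m4 W)).erase m4,
          ∀ y ∈ W' \ (((σ (insert m4 W)).erase m4 : Finset ℕ) : Set ℕ), x < y := by
        intro x hx y hy
        exact hsegp.2 x hx y hy.1 (fun hc => hy.2 (by exact_mod_cast hc))
      have hTIapp := hTI (insert m4 W) hi1 hi2 _ hTX4 hTinf
        (by rw [← hσ'hd W h1 h2] at *; exact hTgt) _ hT'X4 hT'inf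
        (by rw [← hσ'hd W h1 h2] at *; exact hT'gt)
      rw [← hσ'hd W h1 h2] at hTIapp
      rw [hWsplit, hW'split] at hTIapp
      exact hTIapp.symm
  have hanti' : ∀ W, W ⊆ tl X4 → W.Infinite → ∀ W', W' ⊆ tl X4 → W'.Infinite →
      (σ (insert m4 W)).erase m4 ⊆ (σ (insert m4 W')).erase m4 →
      (σ (insert m4 W)).erase m4 = (σ (insert m4 W')).erase m4 := by
    intro W h1 h2 W' h1' h2' hsub
    obtain ⟨hi1, hi2, hi3⟩ := hins W h1 h2
    obtain ⟨hi1', hi2', hi3'⟩ := hins W' h1' h2'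
    have hm4W' : m4 ∈ σ (insert m4 W') := by
      have := iseg_sInf_mem (hseg _ (hi1'.trans hX4X) hi2') (hne _ (hi1'.trans hX4X) hi2')
      rwa [hi3'] at this
    have hsub' : σ (insert m4 W) ⊆ σ (insert m4 W') := by
      intro x hx
      by_cases hxm : x = m4
      · rw [hxm]; exact hm4W'
      · exact Finset.mem_of_mem_erase (hsub (Finset.mem_erase.2 ⟨hxm, hx⟩))
    have heq := hanti (insert m4 W) (hi1.trans hX4X) hi2 (insert m4 W')
      (hi1'.trans hX4X) hi2' hsub'
    rw [heq]
  exact ⟨m4, hX4X haX4,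
    ⟨tl X4, tl_infinite hX4inf, fun W => (σ (insert m4 W)).erase m4, hne', hseg', hloc',
      hanti', fun W h1 h2 => hbad W ((h1.trans hX'X4).trans hX4X) h2⟩,
    hX'X4.trans hX4X, hX'gt, fun W _ _ => rfl⟩

end Step

end Stmt2Aux
namespace Stmt2Aux

section Iter

variable {P : Type*} [PartialOrder P]

/-- iterating the step lemma leads to a contradiction -/
theorem no_lv (hwqo : IsWqo ((· ≤ ·) : P → P → Prop))
    (hfin : {I : Set P | IsIdealRel (· ≤ ·) I ∧ ¬ IsPrincipalRel (· ≤ ·) I}.Finite)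
    (v : Set ℕ → P) (L0 : Lv P v) : False := by
  classical
  set Inv : Lv P v × Finset ℕ → Prop := fun p =>
    (∀ x ∈ p.2, ∀ y ∈ p.1.X, x < y) ∧ p.1.X ⊆ L0.X ∧ ((p.2 : Set ℕ) ⊆ L0.X) ∧
    (∀ W, W ⊆ p.1.X → W.Infinite →
      ((p.1.σ W : Set ℕ)) = (L0.σ ((p.2 : Set ℕ) ∪ W) : Set ℕ) \ (p.2 : Set ℕ))
    with hInvdef
  have hstep : ∀ q : {p : Lv P v × Finset ℕ // Inv p}, ∃ q' : {p : Lv P v × Finset ℕ // Inv p},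
      ∃ a, a ∈ q.val.1.X ∧ a ∉ q.val.2 ∧ q'.val.2 = insert a q.val.2 ∧
        q'.val.1.X ⊆ q.val.1.X := by
    rintro ⟨⟨L, F⟩, hI1, hI2, hI3, hI4⟩
    obtain ⟨a, haX, L', hL'sub, hL'gt, hL'σ⟩ := step_lemma hwqo hfin v L
    have haF : a ∉ F := fun h => lt_irrefl a (hI1 a h a haX)
    refine ⟨⟨(L', insert a F), ?_, hL'sub.trans hI2, ?_, ?_⟩, a, haX, haF, rfl, hL'sub⟩
    · intro x hx y hy
      rcases Finset.mem_insert.1 hx with rfl | hx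
      · exact hL'gt y hy
      · exact hI1 x hx y (hL'sub hy)
    · intro x hx
      rcases Finset.mem_insert.1 (by exact_mod_cast hx) with rfl | hx
      · exact hI2 haX
      · exact hI3 hx
    · intro W hW hWinf
      have hiW : insert a W ⊆ L.X := by
        intro y hy
        rcases Set.mem_insert_iff.1 hy with rfl | hy
        · exact haX
        · exact hL'sub (hW hy)
      have hiWinf : (insert a W).Infinite := hWinf.mono (Set.subset_insert _ _)
      have h1 := hL'σ W hW hWinf
      have h2 := hI4 (insert a W) hiW hiWinf
      have hsets : (F : Set ℕ) ∪ insert a W = ((insert a F : Finset ℕ) : Set ℕ) ∪ W := by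
        ext x
        simp only [Set.mem_union, Set.mem_insert_iff, Finset.coe_insert, Finset.mem_coe]
        tauto
      rw [h1]
      push_cast [Finset.coe_erase]
      rw [h2, hsets]
      rw [Set.diff_diff]
      congr 1
      simp only [Finset.coe_insert]
      ext x
      simp only [Set.mem_union, Set.mem_insert_iff, Set.mem_singleton_iff, Finset.mem_coe]
      tauto
  have hbase : Inv (L0, (∅ : Finset ℕ)) := by
    refine ⟨by simp, le_refl _, by simp, ?_⟩
    intro W hW hWinf
    simp
  set st := chainRec hstep ⟨(L0, ∅), hbase⟩ with hstdef
  have spec := chainRec_spec hstep (⟨(L0, ∅), hbase⟩ : {p : Lv P v × Finset ℕ // Inv p})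
  set F : ℕ → Finset ℕ := fun n => (st n).val.2 with hFdef
  set XX : ℕ → Set ℕ := fun n => (st n).val.1.X with hXXdef
  have hInv : ∀ n, Inv ((st n).val) := fun n => (st n).2
  have hF1 : ∀ n, ∃ a, a ∈ XX n ∧ a ∉ F n ∧ F (n+1) = insert a (F n) ∧ XX (n+1) ⊆ XX n :=
    fun n => spec n
  have hFmono1 : ∀ n, F n ⊆ F (n+1) := by
    intro n
    obtain ⟨a, _, _, h3, _⟩ := hF1 n
    rw [h3]; exact Finset.subset_insert _ _
  have hFmono : ∀ m n, m ≤ n → F m ⊆ F n := by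
    intro m n h
    induction n with
    | zero =>
      have hm : m = 0 := by omega
      subst hm; exact Finset.Subset.refl _
    | succ n ih =>
      rcases Nat.lt_or_ge m (n+1) with h' | h'
      · exact (ih (by omega)).trans (hFmono1 n)
      · have hm : m = n + 1 := by omega
        subst hm; exact Finset.Subset.refl _
  have hXmono : ∀ m n, m ≤ n → XX n ⊆ XX m := by
    intro m n h
    induction n with
    | zero =>
      have hm : m = 0 := by omega
      subst hm; exact le_refl _
    | succ n ih =>
      rcases Nat.lt_or_ge m (n+1) with h' | h'
      · exact ((hF1 n).choose_spec.2.2.2).trans (ih (by omega))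
      · have hm : m = n + 1 := by omega
        subst hm; exact le_refl _
  have hcard : ∀ n, n ≤ (F n).card := by
    intro n
    induction n with
    | zero => omega
    | succ n ih =>
      obtain ⟨a, _, h2, h3, _⟩ := hF1 n
      rw [h3, Finset.card_insert_of_notMem h2]
      omega
  set A : Set ℕ := ⋃ n, ((F n : Finset ℕ) : Set ℕ) with hAdef
  have hAinf : A.Infinite := infinite_iUnion_finsets hcard
  have hAsub : A ⊆ L0.X := by
    intro y hy
    obtain ⟨n, hn⟩ := Set.mem_iUnion.1 hy
    exact (hInv n).2.2.1 hn
  have hstar : ∀ n m, ∀ x ∈ F n, ∀ y ∈ F m, y ∉ F n → x < y := by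
    intro n m
    induction m with
    | zero =>
      intro x _ y hy _
      simp only [hFdef] at hy
      exact absurd hy (by
        have : (st 0).val.2 = (∅ : Finset ℕ) := rfl
        rw [this]; simp)
    | succ m ih =>
      intro x hx y hy hyn
      obtain ⟨a, haX, haF, h3, _⟩ := hF1 m
      rw [h3] at hy
      rcases Finset.mem_insert.1 hy with rfl | hy
      · -- y = a, the new point at step m
        rcases Nat.lt_or_ge m n with h' | h'
        · exact absurd (hFmono (m+1) n (by omega) (by rw [h3]; exact Finset.mem_insert_self _ _)) hyn
        · exact (hInv m).1 x (hFmono n m h' hx) y haX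
      · exact ih x hx y hy hyn
  have hsstar := L0.hseg A hAsub hAinf
  have hsne := L0.hne A hAsub hAinf
  obtain ⟨r, hr⟩ := finset_subset_of_subset_iUnion hFmono (L0.σ A) hsstar.1
  have hXr : XX r ⊆ L0.X := (hInv r).2.1
  have hXrinf : (XX r).Infinite := (st r).val.1.hX
  have hunion : ((F r : Finset ℕ) : Set ℕ) ∪ XX r ⊆ L0.X := by
    intro y hy
    rcases hy with hy | hy
    · exact (hInv r).2.2.1 hy
    · exact hXr hy
  have huninf : (((F r : Finset ℕ) : Set ℕ) ∪ XX r).Infinite :=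
    hXrinf.mono (Set.subset_union_right)
  have hisegsub : InitSegSet (L0.σ A) (((F r : Finset ℕ) : Set ℕ) ∪ XX r) := by
    constructor
    · intro x hx
      exact Or.inl (by exact_mod_cast hr (by exact_mod_cast hx))
    · intro x hx y hy hys
      rcases hy with hy | hy
      · -- y comes from A
        have hyA : y ∈ A := Set.mem_iUnion.2 ⟨r, hy⟩
        exact hsstar.2 x hx y hyA hys
      · exact (hInv r).1 x (hr hx) y hy
  have hσeq : L0.σ (((F r : Finset ℕ) : Set ℕ) ∪ XX r) = L0.σ A :=
    (L0.hloc A hAsub hAinf _ hunion huninf hisegsub).1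
  have h4 := (hInv r).2.2.2 (XX r) (le_refl _) hXrinf
  have hempty : (((st r).val.1.σ (XX r) : Finset ℕ) : Set ℕ) = ∅ := by
    rw [h4, hσeq]
    apply Set.diff_eq_empty.2
    exact_mod_cast hr
  have hne := (st r).val.1.hne (XX r) (le_refl _) hXrinf
  rw [← Finset.coe_nonempty] at hne
  rw [hempty] at hne
  exact Set.not_nonempty_empty hne

end Iter

end Stmt2Aux
namespace Stmt2Aux

section Final

variable {P : Type*} [PartialOrder P]

theorem main (hwqo : IsWqo ((· ≤ ·) : P → P → Prop))
    (hfin : {I : Set P | IsIdealRel (· ≤ ·) I ∧ ¬ IsPrincipalRel (· ≤ ·) I}.Finite)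
    (B : Set (Finset ℕ)) (hB : IsBarrier B) (f : Finset ℕ → P) :
    GoodPair (· ≤ ·) B f := by
  classical
  by_contra hgood
  set X0 := unionOf B with hX0def
  -- members of B sit inside X0
  have hmemX0 : ∀ s ∈ B, (s : Set ℕ) ⊆ X0 := by
    intro s hs x hx
    exact Set.mem_biUnion hs hx
  have hX0inf : X0.Infinite := by
    by_contra h
    have hfin' : X0.Finite := Set.not_infinite.1 h
    have hsub : B ⊆ ((hfin'.toFinset.powerset : Finset (Finset ℕ)) : Set (Finset ℕ)) := by
      intro s hs
      simp only [Finset.coe_powerset, Set.mem_preimage, Set.mem_powerset_iff]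
      intro x hx
      simp only [Finset.coe_subset] at *
      have : (x : ℕ) ∈ X0 := hmemX0 s hs hx
      exact hfin'.mem_toFinset.2 this
    exact hB.1.1 ((Finset.finite_toSet _).subset hsub)
  set σ0 : Set ℕ → Finset ℕ := fun W =>
    if h : W ⊆ X0 ∧ W.Infinite then Classical.choose (hB.1.2 W h.1 h.2) else ∅ with hσ0def
  have hσ0 : ∀ W, W ⊆ X0 → W.Infinite →
      σ0 W ∈ B ∧ (σ0 W).Nonempty ∧ InitSegSet (σ0 W) W := by
    intro W h1 h2
    have := Classical.choose_spec (hB.1.2 W h1 h2)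
    obtain ⟨hm, hn, hseg⟩ := this
    simp only [hσ0def, dif_pos (And.intro h1 h2)]
    exact ⟨hm, hn, hseg⟩
  -- uniqueness of the comb
  have huniq : ∀ s ∈ B, ∀ W, W ⊆ X0 → W.Infinite → InitSegSet s W → s = σ0 W := by
    intro s hs W h1 h2 hseg
    obtain ⟨hm, _, hseg'⟩ := hσ0 W h1 h2
    rcases iseg_comp hseg hseg' with h | h
    · exact hB.2 s hs _ hm h
    · exact (hB.2 _ hm s hs h).symm
  set v : Set ℕ → P := fun W => f (σ0 W) with hvdef
  -- badness
  have hbad0 : ∀ W, W ⊆ X0 → W.Infinite → ¬ v W ≤ v (tl W) := by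
    intro W h1 h2 hle
    obtain ⟨hm, hn, hseg⟩ := hσ0 W h1 h2
    have htl1 : tl W ⊆ X0 := (tl_subset W).trans h1
    have htl2 : (tl W).Infinite := tl_infinite h2
    obtain ⟨hm', hn', hseg'⟩ := hσ0 (tl W) htl1 htl2
    set m := sInf W with hm0
    set s := σ0 W with hs0
    set t := σ0 (tl W) with ht0
    set r := insert m t with hr0
    have hmW : m ∈ W := Nat.sInf_mem h2.nonempty
    have hms : m ∈ s := iseg_sInf_mem hseg hn
    have hmt : m ∉ t := fun h => (hseg'.1 h).2 rfl
    -- r is an initial segment of W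
    have hrseg : InitSegSet r W := by
      constructor
      · intro x hx
        rcases Finset.mem_insert.1 (by exact_mod_cast hx) with rfl | hx
        · exact hmW
        · exact (hseg'.1 hx).1
      · intro x hx y hy hyr
        have hym : y ≠ m := fun h => hyr (by rw [h]; exact Finset.mem_insert_self _ _)
        have hytl : y ∈ tl W := ⟨hy, by simpa using hym⟩
        rcases Finset.mem_insert.1 hx with rfl | hx
        · have := Nat.sInf_le hy
          omega
        · exact hseg'.2 x hx y hytl (fun h => hyr (Finset.mem_insert_of_mem h))
    -- s ⊆ r
    have hsr : s ⊆ r := by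
      rcases iseg_comp hseg hrseg with h | h
      · exact h
      · exfalso
        have hts : t ⊆ s := fun x hx => h (Finset.mem_insert_of_mem hx)
        have : t = s := hB.2 t hm' s hm hts
        rw [← this] at hms
        exact hmt hms
    -- s ≠ r
    have hsne : s ≠ r := by
      intro h
      have hts : t ⊆ s := by
        rw [h]
        exact Finset.subset_insert _ _
      have : t = s := hB.2 t hm' s hm hts
      rw [← this] at hms
      exact hmt hms
    -- Tri s t
    have htri : Tri s t := by
      refine ⟨r, ⟨hsr, ?_⟩, hsne, m, Finset.mem_insert_self _ _, ?_, ?_⟩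
      · intro x hx y hy hys
        exact hseg.2 x hx y (hrseg.1 (by exact_mod_cast hy)) hys
      · intro b hb
        rcases Finset.mem_insert.1 hb with rfl | hb
        · exact le_refl _
        · exact Nat.sInf_le ((hseg'.1 hb).1)
      · rw [hr0, Finset.erase_insert hmt]
    exact hgood ⟨s, hm, t, hm', htri, hle⟩
  -- assemble level 0
  have hloc0 : ∀ W, W ⊆ X0 → W.Infinite → ∀ W', W' ⊆ X0 → W'.Infinite →
      InitSegSet (σ0 W) W' → σ0 W' = σ0 W ∧ v W' = v W := by
    intro W h1 h2 W' h1' h2' hseg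
    have h := (huniq _ (hσ0 W h1 h2).1 W' h1' h2' hseg).symm
    exact ⟨h, by rw [hvdef]; simp only []; rw [h]⟩
  have hanti0 : ∀ W, W ⊆ X0 → W.Infinite → ∀ W', W' ⊆ X0 → W'.Infinite →
      σ0 W ⊆ σ0 W' → σ0 W = σ0 W' := by
    intro W h1 h2 W' h1' h2' hsub
    exact hB.2 _ (hσ0 W h1 h2).1 _ (hσ0 W' h1' h2').1 hsub
  exact no_lv hwqo hfin v
    ⟨X0, hX0inf, σ0, fun W h1 h2 => (hσ0 W h1 h2).2.1, fun W h1 h2 => (hσ0 W h1 h2).2.2,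
      hloc0, hanti0, hbad0⟩

end Final

end Stmt2Aux
/-- If `P` is wqo and the set of non-principal ideals of `P` is finite, then `P` is bqo. -/
theorem stmt2 {P : Type*} [PartialOrder P]
    (hwqo : IsWqo ((· ≤ ·) : P → P → Prop))
    (hfin : {I : Set P | IsIdealRel (· ≤ ·) I ∧ ¬ IsPrincipalRel (· ≤ ·) I}.Finite) :
    IsBqo ((· ≤ ·) : P → P → Prop) := by
  intro B hB f
  exact Stmt2Aux.main hwqo hfin B hB f
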